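/- arXiv:1602.02688 — 3 statements merged into one kernel-verified Lean document; each statement's English description precedes it below -/
import Mathlib

section
/- Let G be a torsion group and let α be an infinite cardinal with α ≥ #G. Then there exists a torsion group H of cardinality α which has the R_∞ property and which contains a subgroup isomorphic to G. -/
set_option maxHeartbeats 1000000

/-- Twisted conjugacy: `a` and `b` are `φ`-twisted conjugate if `(φ x)⁻¹ * a * x = b`
for some `x`. -/
def TwistedConj {G : Type*} [Group G] (φ : G ≃* G) (a b : G) : Prop :=
  ∃ x : G, (φ x)⁻¹ * a * x = b

/-- A group has the `R∞` property if every automorphism has infinitely many twisted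
conjugacy classes. -/
def RInfinity (G : Type*) [Group G] : Prop :=
  ∀ φ : G ≃* G, Infinite (Quot (TwistedConj φ))

universe u

noncomputable section

namespace RInfC

open Function Set DihedralGroup

/-! ### prime sequence -/

def pr (i : ℕ) : ℕ := Nat.nth Nat.Prime (i + 1)

lemma pr_prime (i : ℕ) : (pr i).Prime :=
  Nat.nth_mem_of_infinite Nat.infinite_setOf_prime _

lemma two_lt_pr (i : ℕ) : 2 < pr i := by
  have h0 : Nat.nth Nat.Prime 0 < pr i :=
    Nat.nth_strictMono Nat.infinite_setOf_prime (Nat.succ_pos i)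
  have h2 : 2 ≤ Nat.nth Nat.Prime 0 :=
    (Nat.nth_mem_of_infinite Nat.infinite_setOf_prime 0).two_le
  omega

lemma pr_injective : Function.Injective pr := fun a b h => by
  have := (Nat.nth_strictMono Nat.infinite_setOf_prime).injective h
  omega

lemma pr_pos (i : ℕ) : 0 < pr i := (pr_prime i).pos

lemma odd_pr (i : ℕ) : Odd (pr i) :=
  (pr_prime i).odd_of_ne_two (by have := two_lt_pr i; omega)

/-! ### restricted (finite support) subgroups -/

def restrictedPi {ι : Type*} (M : ι → Type*) [∀ i, Group (M i)] :
    Subgroup (∀ i, M i) where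
  carrier := {f | {i | f i ≠ 1}.Finite}
  one_mem' := by simp
  mul_mem' := by
    intro a b ha hb
    refine (ha.union hb).subset ?_
    intro i hi
    by_contra hmem
    simp only [Set.mem_union, Set.mem_setOf_eq, not_or, not_not] at hmem
    exact hi (by simp [hmem.1, hmem.2])
  inv_mem' := by
    intro a ha
    refine ha.subset fun i hi => ?_
    simp only [Set.mem_setOf_eq, Pi.inv_apply, ne_eq, inv_eq_one] at hi ⊢
    exact hi

def finPerm (J : Type*) : Subgroup (Equiv.Perm J) where
  carrier := {σ | {x | σ x ≠ x}.Finite}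
  one_mem' := by simp
  mul_mem' := by
    intro a b ha hb
    refine (hb.union ha).subset ?_
    intro x hx
    by_contra hmem
    simp only [Set.mem_union, Set.mem_setOf_eq, not_or, not_not] at hmem
    exact hx (by simp [Equiv.Perm.mul_apply, hmem.1, hmem.2])
  inv_mem' := by
    intro a ha
    refine ha.subset fun x hx => ?_
    simp only [Set.mem_setOf_eq] at hx ⊢
    intro h
    refine hx ?_
    conv_lhs => rw [← h]
    rw [← Equiv.Perm.mul_apply, inv_mul_cancel, Equiv.Perm.one_apply]


/-! ### the wreath-like group W -/

variable (J G : Type u) [Group G]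

abbrev BaseSub : Subgroup (J → G) := restrictedPi (fun _ : J => G)

def baseMap (σ : Equiv.Perm J) (f : J → G) : J → G := fun x => f (σ.symm x)

lemma baseMap_mem {σ : Equiv.Perm J} {f : J → G} (hf : f ∈ BaseSub J G) :
    baseMap J G σ f ∈ BaseSub J G := by
  refine (Set.Finite.image σ hf).subset ?_
  intro x hx
  exact ⟨σ.symm x, hx, by simp⟩

lemma baseMap_mul (σ : Equiv.Perm J) (f g : J → G) :
    baseMap J G σ (f * g) = baseMap J G σ f * baseMap J G σ g := rfl

def act : ↥(finPerm J) →* MulAut ↥(BaseSub J G) :=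
  MonoidHom.mk'
    (fun σ =>
      { toFun := fun f => ⟨baseMap J G σ.1 f.1, baseMap_mem J G f.2⟩
        invFun := fun f => ⟨baseMap J G σ.1⁻¹ f.1, baseMap_mem J G f.2⟩
        left_inv := by intro f; ext x; simp [baseMap, Equiv.Perm.inv_def]
        right_inv := by intro f; ext x; simp [baseMap, Equiv.Perm.inv_def]
        map_mul' := by intro f g; rfl })
    (by
      intro σ τ
      refine MulEquiv.ext fun f => Subtype.ext (funext fun x => ?_)
      simp [baseMap, Equiv.Perm.mul_def]; rfl)

abbrev W := ↥(BaseSub J G) ⋊[act J G] ↥(finPerm J)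

/-! ### the dihedral part -/

abbrev ι : Type u := ULift ℕ

abbrev DD (i : ι.{u}) : Type := DihedralGroup (pr i.down)

abbrev DSub : Subgroup (∀ i : ι.{u}, DD i) := restrictedPi DD

abbrev D : Type u := ↥(DSub.{u})

/-! ### the big group H -/

abbrev BigH := W J G × D.{u}


/-! ### dihedral helpers -/

lemma r_pow {n : ℕ} (y : ZMod n) (m : ℕ) : (r y : DihedralGroup n) ^ m = r (m • y) := by
  induction m with
  | zero => simp
  | succ k ih => rw [pow_succ, ih, r_mul_r, succ_nsmul]

lemma sr_sq {n : ℕ} (y : ZMod n) : (sr y : DihedralGroup n) ^ 2 = 1 := by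
  rw [pow_two, sr_mul_self]

lemma sr_pow_odd {n : ℕ} (y : ZMod n) {m : ℕ} (hm : Odd m) :
    (sr y : DihedralGroup n) ^ m = sr y := by
  obtain ⟨k, rfl⟩ := hm
  rw [pow_add, pow_mul, sr_sq, one_pow, one_mul, pow_one]

lemma r_inv {n : ℕ} (y : ZMod n) : (r y : DihedralGroup n)⁻¹ = r (-y) := by
  apply inv_eq_of_mul_eq_one_right
  rw [r_mul_r, add_neg_cancel, one_def]

lemma sr_inv {n : ℕ} (y : ZMod n) : (sr y : DihedralGroup n)⁻¹ = sr y := by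
  apply inv_eq_of_mul_eq_one_right
  rw [sr_mul_self]

lemma r_zpow {n : ℕ} (y : ZMod n) (m : ℤ) : (r y : DihedralGroup n) ^ m = r (m • y) := by
  cases m with
  | ofNat k => simpa using r_pow y k
  | negSucc k =>
      rw [zpow_negSucc, r_pow, r_inv]
      congr 1
      rw [nsmul_eq_mul, zsmul_eq_mul]
      push_cast [Int.negSucc_eq]
      ring

lemma dih_pow_two_mul {n : ℕ} (x : DihedralGroup n) : x ^ (2 * n) = 1 := by
  cases x with
  | r y =>
      rw [r_pow, nsmul_eq_mul]
      have h : ((2 * n : ℕ) : ZMod n) = 0 := by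
        rw [ZMod.natCast_eq_zero_iff]
        exact dvd_mul_left n 2
      rw [h, zero_mul, one_def]
  | sr y => rw [pow_mul, sr_sq, one_pow]

/-- parity homomorphism -/
def par {n : ℕ} : DihedralGroup n → ℤˣ
  | .r _ => 1
  | .sr _ => -1

def parity {n : ℕ} : DihedralGroup n →* ℤˣ where
  toFun := par
  map_one' := rfl
  map_mul' := by
    rintro (a | a) (b | b) <;>
      simp [par, r_mul_r, r_mul_sr, sr_mul_r, sr_mul_sr]


/-! ### basic elements of H -/

instance : DecidableEq ι.{u} := fun a b =>
  decidable_of_iff (a.down = b.down) (by cases a; cases b; simp)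

instance (k : ℕ) : NeZero (pr k) := ⟨(pr_pos k).ne'⟩

lemma mulSingle_mem {ι' : Type*} {M : ι' → Type*} [∀ i, Group (M i)] [DecidableEq ι']
    (i : ι') (x : M i) : Pi.mulSingle i x ∈ restrictedPi M := by
  refine (Set.finite_singleton i).subset ?_
  intro j hj
  simp only [Set.mem_setOf_eq] at hj
  by_contra hne
  simp only [Set.mem_singleton_iff] at hne
  exact hj (Pi.mulSingle_eq_of_ne hne x)

def delt (i : ι.{u}) (x : DD i) : D.{u} := ⟨Pi.mulSingle i x, mulSingle_mem i x⟩

lemma delt_mul (i : ι.{u}) (x y : DD i) : delt i x * delt i y = delt i (x * y) := by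
  apply Subtype.ext
  simp only [delt, Subgroup.coe_mul]
  exact (Pi.mulSingle_mul i x y).symm

def AElt (i : ι.{u}) (c : ZMod (pr i.down)) : BigH J G := (1, delt i (DihedralGroup.r c))

def a0 (i : ι.{u}) : BigH J G := AElt J G i 1

def tElt (i : ι.{u}) : BigH J G := (1, delt i (DihedralGroup.sr 0))

def chi (i : ι.{u}) : BigH J G →* ℤˣ :=
  (parity.comp ((Pi.evalMonoidHom DD i).comp (DSub.{u}).subtype)).comp
    (MonoidHom.snd (W J G) D.{u})

lemma chi_apply (i : ι.{u}) (x : BigH J G) :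
    chi J G i x = par ((x.2 : ∀ k : ι.{u}, DD k) i) := rfl

lemma chi_tElt_same (i : ι.{u}) : chi J G i (tElt J G i) = -1 := by
  rw [chi_apply]
  simp only [tElt, delt]
  rw [Pi.mulSingle_eq_same]
  rfl

lemma chi_tElt_ne {i j : ι.{u}} (h : j ≠ i) : chi J G j (tElt J G i) = 1 := by
  rw [chi_apply]
  simp only [tElt, delt]
  rw [Pi.mulSingle_eq_of_ne h]
  rw [show (1 : DD j) = DihedralGroup.r 0 from one_def]
  rfl

lemma AElt_zero (i : ι.{u}) : AElt J G i 0 = 1 := by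
  unfold AElt
  have : delt i (DihedralGroup.r (0 : ZMod (pr i.down))) = 1 := by
    apply Subtype.ext
    simp only [delt]
    rw [show (DihedralGroup.r (0 : ZMod (pr i.down))) = (1 : DD i) from one_def.symm,
      Pi.mulSingle_one]
    rfl
  rw [this]
  rfl

lemma AElt_mul (i : ι.{u}) (c c' : ZMod (pr i.down)) :
    AElt J G i c * AElt J G i c' = AElt J G i (c + c') := by
  unfold AElt
  rw [Prod.mk_mul_mk, one_mul, delt_mul, r_mul_r]

lemma AElt_inv (i : ι.{u}) (c : ZMod (pr i.down)) :
    (AElt J G i c)⁻¹ = AElt J G i (-c) := by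
  apply inv_eq_of_mul_eq_one_right
  rw [AElt_mul, add_neg_cancel, AElt_zero]

lemma AElt_pow (i : ι.{u}) (c : ZMod (pr i.down)) (m : ℕ) :
    (AElt J G i c) ^ m = AElt J G i (m • c) := by
  induction m with
  | zero => simp [AElt_zero]
  | succ k ih => rw [pow_succ, ih, AElt_mul, succ_nsmul]

lemma AElt_zpow (i : ι.{u}) (c : ZMod (pr i.down)) (m : ℤ) :
    (AElt J G i c) ^ m = AElt J G i (m • c) := by
  cases m with
  | ofNat k => simpa using AElt_pow J G i c k
  | negSucc k =>
      rw [zpow_negSucc, AElt_pow, AElt_inv]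
      congr 1
      rw [nsmul_eq_mul, zsmul_eq_mul]
      push_cast [Int.negSucc_eq]
      ring

lemma AElt_inj (i : ι.{u}) : Function.Injective (AElt J G i) := by
  intro c c' h
  have h2 := congrArg (fun z : BigH J G => ((z.2 : ∀ k : ι.{u}, DD k) i)) h
  simpa [AElt, delt, Pi.mulSingle_eq_same] using h2

lemma AElt_eq_one_iff (i : ι.{u}) (c : ZMod (pr i.down)) :
    AElt J G i c = 1 ↔ c = 0 := by
  constructor
  · intro h
    exact AElt_inj J G i (h.trans (AElt_zero J G i).symm)
  · rintro rfl
    exact AElt_zero J G i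

lemma conj_AElt (x : BigH J G) (i : ι.{u}) (c : ZMod (pr i.down)) :
    x * AElt J G i c * x⁻¹ =
      AElt J G i (if chi J G i x = 1 then c else -c) := by
  obtain ⟨w, d⟩ := x
  have hchi : chi J G i (w, d) = par ((d : ∀ k : ι.{u}, DD k) i) := rfl
  unfold AElt
  rw [Prod.inv_mk, Prod.mk_mul_mk, Prod.mk_mul_mk]
  rw [mul_one, mul_inv_cancel]
  congr 1
  apply Subtype.ext
  funext j
  have hval : ((d * delt i (DihedralGroup.r c) * d⁻¹ : D.{u}) : ∀ k : ι.{u}, DD k) j =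
      (d : ∀ k : ι.{u}, DD k) j * Pi.mulSingle i (DihedralGroup.r c) j *
        ((d : ∀ k : ι.{u}, DD k) j)⁻¹ := rfl
  rw [hval]
  simp only [delt]
  by_cases hj : j = i
  · subst hj
    rw [Pi.mulSingle_eq_same, Pi.mulSingle_eq_same]
    rcases hdj : (d : ∀ k : ι.{u}, DD k) j with k | k
    · rw [hchi, hdj]
      rw [if_pos (show par (DihedralGroup.r k) = 1 from rfl)]
      rw [r_inv, r_mul_r, r_mul_r]
      congr 1
      ring
    · rw [hchi, hdj]
      rw [if_neg (show ¬ par (DihedralGroup.sr k) = 1 from by rw [show par (DihedralGroup.sr k) = -1 from rfl]; decide)]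
      rw [sr_inv, sr_mul_r, sr_mul_sr]
      congr 1
      ring
  · rw [Pi.mulSingle_eq_of_ne hj, Pi.mulSingle_eq_of_ne hj]
    rw [mul_one, mul_inv_cancel]


/-! ### moving conjugates in W -/

lemma swap_mem_finPerm [DecidableEq J] (a b : J) : Equiv.swap a b ∈ finPerm J := by
  refine (Set.Finite.insert a (Set.finite_singleton b)).subset ?_
  intro y hy
  simp only [Set.mem_setOf_eq] at hy
  by_contra hmem
  simp only [Set.mem_insert_iff, Set.mem_singleton_iff, not_or] at hmem
  exact hy (Equiv.swap_apply_of_ne_of_ne hmem.1 hmem.2)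

lemma conj_inr (τ : ↥(finPerm J)) (x : W J G) :
    (SemidirectProduct.inr τ) * x * (SemidirectProduct.inr τ)⁻¹ =
      ⟨(act J G τ) x.left, τ * x.right * τ⁻¹⟩ := by
  ext <;>
    simp [SemidirectProduct.mul_left, SemidirectProduct.mul_right]

lemma moving_exists [Infinite J] (x : W J G) (hx : x ≠ 1) :
    ∃ c : ℕ → W J G, (∀ m, ∃ y : W J G, y * x * y⁻¹ = c m) ∧ Function.Injective c := by
  classical
  by_cases hσ : x.right = 1
  · have hf : x.left ≠ 1 := fun hl => hx (SemidirectProduct.ext hl hσ)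
    obtain ⟨s, hs⟩ : ∃ s : J, (x.left : J → G) s ≠ 1 := by
      by_contra hall
      push_neg at hall
      exact hf (Subtype.ext (funext hall))
    have hBc : ({y : J | (x.left : J → G) y ≠ 1}ᶜ).Infinite := x.left.2.infinite_compl
    let g := hBc.natEmbedding
    have hgnot : ∀ m, (x.left : J → G) (g m).1 = 1 := fun m => by
      have h2 := (g m).2
      simp only [Set.mem_compl_iff, Set.mem_setOf_eq, not_not] at h2
      exact h2
    have hgs : ∀ m, (g m).1 ≠ s := fun m h => hs (h ▸ hgnot m)
    have hgg : ∀ {m m' : ℕ}, m ≠ m' → (g m).1 ≠ (g m').1 := fun {m m'} hne h =>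
      hne (g.injective (Subtype.ext h))
    let τ : ℕ → ↥(finPerm J) := fun m => ⟨Equiv.swap s (g m).1, swap_mem_finPerm J s (g m).1⟩
    refine ⟨fun m => (SemidirectProduct.inr (τ m)) * x * (SemidirectProduct.inr (τ m))⁻¹,
      fun m => ⟨_, rfl⟩, ?_⟩
    intro m m' h
    by_contra hne
    have h1 : (act J G (τ m)) x.left = (act J G (τ m')) x.left :=
      congrArg SemidirectProduct.left
        ((conj_inr J G (τ m) x).symm.trans (h.trans (conj_inr J G (τ m') x)))
    have h2 : (x.left : J → G) ((Equiv.swap s (g m).1).symm (g m).1)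
        = (x.left : J → G) ((Equiv.swap s (g m').1).symm (g m).1) :=
      congrArg (fun u : ↥(BaseSub J G) => (u : J → G) (g m).1) h1
    rw [Equiv.symm_swap, Equiv.symm_swap, Equiv.swap_apply_right,
      Equiv.swap_apply_of_ne_of_ne (hgs m) (hgg hne)] at h2
    exact hs (h2.trans (hgnot m))
  · obtain ⟨s, hs⟩ : ∃ s : J, (x.right : Equiv.Perm J) s ≠ s := by
      by_contra hall
      push_neg at hall
      exact hσ (Subtype.ext (Equiv.ext hall))
    have hBc : (({y : J | (x.right : Equiv.Perm J) y ≠ y} ∪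
        {s, (x.right : Equiv.Perm J) s})ᶜ).Infinite :=
      (Set.Finite.union x.right.2
        (Set.Finite.insert _ (Set.finite_singleton _))).infinite_compl
    let g := hBc.natEmbedding
    have hginfo : ∀ m, (x.right : Equiv.Perm J) (g m).1 = (g m).1 ∧ (g m).1 ≠ s ∧
        (g m).1 ≠ (x.right : Equiv.Perm J) s := fun m => by
      have h2 := (g m).2
      simp only [Set.mem_compl_iff, Set.mem_union, Set.mem_setOf_eq, Set.mem_insert_iff,
        Set.mem_singleton_iff, not_or, not_not] at h2
      exact ⟨h2.1, h2.2.1, h2.2.2⟩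
    have hgg : ∀ {m m' : ℕ}, m ≠ m' → (g m).1 ≠ (g m').1 := fun {m m'} hne h =>
      hne (g.injective (Subtype.ext h))
    let τ : ℕ → ↥(finPerm J) := fun m => ⟨Equiv.swap s (g m).1, swap_mem_finPerm J s (g m).1⟩
    refine ⟨fun m => (SemidirectProduct.inr (τ m)) * x * (SemidirectProduct.inr (τ m))⁻¹,
      fun m => ⟨_, rfl⟩, ?_⟩
    intro m m' h
    by_contra hne
    have h1 : τ m * x.right * (τ m)⁻¹ = τ m' * x.right * (τ m')⁻¹ :=
      congrArg SemidirectProduct.right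
        ((conj_inr J G (τ m) x).symm.trans (h.trans (conj_inr J G (τ m') x)))
    have h2 : ((τ m : Equiv.Perm J) * (x.right : Equiv.Perm J) * (τ m : Equiv.Perm J)⁻¹)
          (g m).1
        = ((τ m' : Equiv.Perm J) * (x.right : Equiv.Perm J) * (τ m' : Equiv.Perm J)⁻¹)
          (g m).1 := by
      have := congrArg (fun u : ↥(finPerm J) => (u : Equiv.Perm J) (g m).1) h1
      simpa using this
    have e1 : ((τ m : Equiv.Perm J) * (x.right : Equiv.Perm J) * (τ m : Equiv.Perm J)⁻¹)
        (g m).1 = (x.right : Equiv.Perm J) s := by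
      show (Equiv.swap s (g m).1) ((x.right : Equiv.Perm J) ((Equiv.swap s (g m).1)⁻¹ (g m).1))
        = _
      rw [Equiv.swap_inv, Equiv.swap_apply_right]
      exact Equiv.swap_apply_of_ne_of_ne hs (fun hc => (hginfo m).2.2 hc.symm)
    have e2 : ((τ m' : Equiv.Perm J) * (x.right : Equiv.Perm J) * (τ m' : Equiv.Perm J)⁻¹)
        (g m).1 = (g m).1 := by
      show (Equiv.swap s (g m').1) ((x.right : Equiv.Perm J) ((Equiv.swap s (g m').1)⁻¹ (g m).1))
        = _
      rw [Equiv.swap_inv, Equiv.swap_apply_of_ne_of_ne (hginfo m).2.1 (hgg hne),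
        (hginfo m).1, Equiv.swap_apply_of_ne_of_ne (hginfo m).2.1 (hgg hne)]
    rw [e1, e2] at h2
    exact (hginfo m).2.2 h2.symm

lemma eq_one_of_central [Infinite J] (x : W J G) (hc : ∀ y : W J G, y * x * y⁻¹ = x) :
    x = 1 := by
  by_contra hx
  obtain ⟨c, hconj, hinj⟩ := moving_exists J G x hx
  have h0 : c 0 = x := by obtain ⟨y, hy⟩ := hconj 0; rw [← hy, hc]
  have h1 : c 1 = x := by obtain ⟨y, hy⟩ := hconj 1; rw [← hy, hc]
  exact absurd (hinj (h0.trans h1.symm)) (by norm_num)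


/-! ### prod/pi power component helpers -/

lemma snd_pow {M N : Type*} [Monoid M] [Monoid N] (x : M × N) (n : ℕ) :
    (x ^ n).2 = x.2 ^ n := by
  induction n with
  | zero => simp
  | succ k ih => rw [pow_succ, pow_succ, Prod.snd_mul, ih]

lemma fst_pow' {M N : Type*} [Monoid M] [Monoid N] (x : M × N) (n : ℕ) :
    (x ^ n).1 = x.1 ^ n := by
  induction n with
  | zero => simp
  | succ k ih => rw [pow_succ, pow_succ, Prod.fst_mul, ih]

lemma snd_zpow {M N : Type*} [Group M] [Group N] (x : M × N) (n : ℤ) :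
    (x ^ n).2 = x.2 ^ n := by
  cases n with
  | ofNat k => simpa using snd_pow x k
  | negSucc k => rw [zpow_negSucc, zpow_negSucc, Prod.snd_inv, snd_pow]

lemma D_pow_apply (e : D.{u}) (n : ℕ) (j : ι.{u}) :
    ((e ^ n : D.{u}) : ∀ k : ι.{u}, DD k) j = ((e : ∀ k : ι.{u}, DD k) j) ^ n := by
  rw [SubmonoidClass.coe_pow]
  rfl

lemma D_zpow_apply (e : D.{u}) (n : ℤ) (j : ι.{u}) :
    ((e ^ n : D.{u}) : ∀ k : ι.{u}, DD k) j = ((e : ∀ k : ι.{u}, DD k) j) ^ n := by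
  rw [SubgroupClass.coe_zpow]
  rfl

/-! ### key rigidity lemma : the image of `a0 i` under any automorphism -/

lemma AElt_mem_zpowers (i : ι.{u}) (c : ZMod (pr i.down)) :
    AElt J G i c ∈ Subgroup.zpowers (a0 J G i) := by
  refine ⟨(c.val : ℤ), ?_⟩
  show (a0 J G i) ^ ((c.val : ℕ) : ℤ) = AElt J G i c
  rw [a0, AElt_zpow]
  congr 1
  rw [zsmul_eq_mul, mul_one]
  push_cast
  exact ZMod.natCast_rightInverse c

lemma a0_zpowers_normal (i : ι.{u}) : (Subgroup.zpowers (a0 J G i)).Normal := by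
  constructor
  intro n hn g
  obtain ⟨m, rfl⟩ := Subgroup.mem_zpowers_iff.mp hn
  rw [show g * (a0 J G i) ^ m * g⁻¹ = (g * (a0 J G i) * g⁻¹) ^ m from (conj_zpow).symm]
  rw [a0, conj_AElt]
  obtain ⟨k, hk⟩ := Subgroup.mem_zpowers_iff.mp (AElt_mem_zpowers J G i
    (if chi J G i g = 1 then (1 : ZMod (pr i.down)) else -1))
  rw [← hk, ← zpow_mul]
  exact Subgroup.zpow_mem _ (Subgroup.mem_zpowers _) _

lemma a0_pow_p (i : ι.{u}) : (a0 J G i) ^ (pr i.down) = 1 := by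
  rw [a0, AElt_pow, nsmul_eq_mul, mul_one, ZMod.natCast_self, AElt_zero]

lemma char_A [Infinite J] (φ : BigH J G ≃* BigH J G) (i : ι.{u}) :
    ∃ c : ZMod (pr i.down), c ≠ 0 ∧ φ (a0 J G i) = AElt J G i c := by
  classical
  haveI : Fact (pr i.down).Prime := ⟨pr_prime i.down⟩
  set z := φ (a0 J G i) with hz
  have hz1 : z ≠ 1 := by
    rw [hz]
    intro hc
    have h1 := (MulEquiv.map_eq_one_iff φ).mp hc
    rw [a0, AElt_eq_one_iff] at h1
    exact one_ne_zero h1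
  have hzp : z ^ (pr i.down) = 1 := by
    rw [hz, ← map_pow, a0_pow_p, map_one]
  have hd : ∀ j : ι.{u}, ((z.2 : ∀ k : ι.{u}, DD k) j) ^ (pr i.down) = 1 := by
    intro j
    have h1 : ((z ^ (pr i.down)).2 : ∀ k : ι.{u}, DD k) j = 1 := by rw [hzp]; rfl
    rwa [snd_pow, D_pow_apply] at h1
  have hrot : ∀ j : ι.{u}, j ≠ i → (z.2 : ∀ k : ι.{u}, DD k) j = 1 := by
    intro j hj
    haveI : Fact (pr j.down).Prime := ⟨pr_prime j.down⟩
    rcases hdj : (z.2 : ∀ k : ι.{u}, DD k) j with k | k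
    · have h1 := hd j
      rw [hdj, r_pow] at h1
      rw [one_def] at h1
      simp only [DihedralGroup.r.injEq] at h1
      rw [nsmul_eq_mul] at h1
      have hne : ((pr i.down : ZMod (pr j.down))) ≠ 0 := by
        rw [Ne, ZMod.natCast_eq_zero_iff]
        intro hdvd
        have heq := (Nat.prime_dvd_prime_iff_eq (pr_prime j.down) (pr_prime i.down)).mp hdvd
        exact hj (ULift.ext j i (pr_injective heq))
      rcases mul_eq_zero.mp h1 with h | h
      · exact absurd h hne
      · rw [h, one_def]
    · exfalso
      have h1 := hd j
      rw [hdj, sr_pow_odd _ (odd_pr _), one_def] at h1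
      cases h1
  have hi : ∃ c : ZMod (pr i.down), (z.2 : ∀ k : ι.{u}, DD k) i = DihedralGroup.r c := by
    rcases hdi : (z.2 : ∀ k : ι.{u}, DD k) i with k | k
    · exact ⟨k, rfl⟩
    · exfalso
      have h1 := hd i
      rw [hdi, sr_pow_odd _ (odd_pr _), one_def] at h1
      cases h1
  obtain ⟨c, hc⟩ := hi
  have hN : ∀ u : BigH J G, u * z * u⁻¹ ∈ Subgroup.zpowers z := by
    intro u
    haveI hNormal : ((Subgroup.zpowers (a0 J G i)).map φ.toMonoidHom).Normal :=
      Subgroup.Normal.map (a0_zpowers_normal J G i) φ.toMonoidHom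
        (MulEquiv.surjective φ)
    have hzmem : z ∈ (Subgroup.zpowers (a0 J G i)).map φ.toMonoidHom :=
      ⟨a0 J G i, Subgroup.mem_zpowers _, rfl⟩
    have h2 := hNormal.conj_mem z hzmem u
    rwa [MonoidHom.map_zpowers] at h2
  by_cases hc0 : c = 0
  · exfalso
    have hd2 : z.2 = 1 := by
      apply Subtype.ext
      funext j
      by_cases hj : j = i
      · subst hj
        rw [hc, hc0]
        exact one_def.symm
      · rw [hrot j hj]
        rfl
    have hw : z.1 ≠ 1 := by
      intro h
      exact hz1 (Prod.ext h hd2)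
    obtain ⟨cc, hconj, hinj⟩ := moving_exists J G z.1 hw
    have hmem : ∀ m, ((cc m, (1 : D.{u})) : BigH J G) ∈ Subgroup.zpowers z := by
      intro m
      obtain ⟨y, hy⟩ := hconj m
      have h3 := hN ((y, 1) : BigH J G)
      have hcomp : ((y, (1 : D.{u})) : BigH J G) * z * ((y, (1 : D.{u})) : BigH J G)⁻¹ =
          ((y * z.1 * y⁻¹, z.2) : BigH J G) := by
        apply Prod.ext <;> simp
      rw [hcomp, hy, hd2] at h3
      exact h3
    have hfin : (Subgroup.zpowers z : Set (BigH J G)).Finite :=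
      IsOfFinOrder.finite_zpowers (isOfFinOrder_iff_pow_eq_one.mpr
        ⟨pr i.down, pr_pos _, hzp⟩)
    have hinf : (Subgroup.zpowers z : Set (BigH J G)).Infinite := by
      apply Set.infinite_of_injective_forall_mem
        (f := fun m : ℕ => ((cc m, (1 : D.{u})) : BigH J G))
      · intro m m' h
        exact hinj (congrArg Prod.fst h)
      · exact hmem
    exact hinf hfin
  · refine ⟨c, hc0, ?_⟩
    have hcent : ∀ y : W J G, y * z.1 * y⁻¹ = z.1 := by
      intro y
      obtain ⟨m, hm⟩ := Subgroup.mem_zpowers_iff.mp (hN ((y, 1) : BigH J G))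
      have hcomp : ((y, (1 : D.{u})) : BigH J G) * z * ((y, (1 : D.{u})) : BigH J G)⁻¹ =
          ((y * z.1 * y⁻¹, z.2) : BigH J G) := by
        apply Prod.ext <;> simp
      rw [hcomp] at hm
      have hDcomp : ((z ^ m).2 : ∀ k : ι.{u}, DD k) i = DihedralGroup.r c := by
        rw [hm]
        exact hc
      rw [snd_zpow, D_zpow_apply, hc, r_zpow] at hDcomp
      simp only [DihedralGroup.r.injEq] at hDcomp
      have hm1 : ((m : ZMod (pr i.down)) - 1) * c = 0 := by
        rw [zsmul_eq_mul] at hDcomp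
        rw [sub_mul, one_mul, hDcomp, sub_self]
      have hmc : (m : ZMod (pr i.down)) = 1 := by
        rcases mul_eq_zero.mp hm1 with h | h
        · exact sub_eq_zero.mp h
        · exact absurd h hc0
      have hdvd : ((pr i.down : ℤ)) ∣ (m - 1) := by
        rw [← ZMod.intCast_zmod_eq_zero_iff_dvd]
        push_cast
        rw [hmc]
        ring
      obtain ⟨t, ht⟩ := hdvd
      have hzm : z ^ m = z := by
        have hmeq : m = 1 + (pr i.down : ℤ) * t := by linarith
        rw [hmeq, zpow_add, zpow_one, zpow_mul, zpow_natCast, hzp, one_zpow, mul_one]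
      rw [hzm] at hm
      exact (congrArg Prod.fst hm).symm
    have hw1 : z.1 = 1 := eq_one_of_central J G z.1 hcent
    rw [hz] at hw1 hc hrot ⊢
    apply Prod.ext
    · rw [hw1]
      rfl
    · apply Subtype.ext
      funext j
      by_cases hj : j = i
      · subst hj
        rw [hc]
        show DihedralGroup.r c = ((delt j (DihedralGroup.r c) : D.{u}) : ∀ k : ι.{u}, DD k) j
        simp only [delt]
        rw [Pi.mulSingle_eq_same]
      · rw [hrot j hj]
        show (1 : DD j) = ((delt i (DihedralGroup.r c) : D.{u}) : ∀ k : ι.{u}, DD k) j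
        simp only [delt]
        rw [Pi.mulSingle_eq_of_ne hj]


lemma one_ne_neg_one_zmod (i : ι.{u}) : (1 : ZMod (pr i.down)) ≠ -1 := by
  haveI : Fact (pr i.down).Prime := ⟨pr_prime i.down⟩
  intro h
  have h2 : ((2 : ℕ) : ZMod (pr i.down)) = 0 := by
    push_cast
    linear_combination h
  rw [ZMod.natCast_eq_zero_iff] at h2
  have h3 := Nat.le_of_dvd (by norm_num) h2
  have h4 := two_lt_pr i.down
  omega

lemma chi_aut [Infinite J] (φ : BigH J G ≃* BigH J G) (i : ι.{u}) (x : BigH J G) :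
    chi J G i (φ x) = chi J G i x := by
  obtain ⟨c, hc0, hc⟩ := char_A J G φ.symm i
  have hφc : φ (AElt J G i c) = AElt J G i 1 := by
    rw [← hc]
    exact MulEquiv.apply_symm_apply φ (a0 J G i)
  have h2 := congrArg φ (conj_AElt J G x i c)
  rw [map_mul, map_mul, map_inv, hφc] at h2
  have h3 := conj_AElt J G (φ x) i 1
  rw [h3] at h2
  rcases Int.units_eq_one_or (chi J G i (φ x)) with hu | hu <;>
    rcases Int.units_eq_one_or (chi J G i x) with hv | hv
  · rw [hu, hv]
  · exfalso
    rw [hu, hv] at h2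
    rw [if_pos rfl, if_neg (by decide)] at h2
    rw [← AElt_inv, map_inv, hφc] at h2
    rw [show (AElt J G i 1)⁻¹ = AElt J G i (-1) from AElt_inv J G i 1] at h2
    exact one_ne_neg_one_zmod i (AElt_inj J G i h2)
  · exfalso
    rw [hu, hv] at h2
    rw [if_neg (by decide), if_pos rfl] at h2
    rw [hφc] at h2
    exact one_ne_neg_one_zmod i (AElt_inj J G i h2).symm
  · rw [hu, hv]


/-! ### the R-infinity property -/

theorem rinf_BigH [Infinite J] : RInfinity (BigH J G) := by
  intro φ
  have hinv : ∀ a b : BigH J G, TwistedConj φ a b → ∀ i, chi J G i a = chi J G i b := by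
    rintro a b ⟨x, rfl⟩ i
    rw [map_mul, map_mul, map_inv, chi_aut J G φ i x]
    rw [mul_comm ((chi J G i x)⁻¹) (chi J G i a), mul_assoc, inv_mul_cancel, mul_one]
  have hinj : Function.Injective
      (fun n : ℕ => Quot.mk (TwistedConj φ) (tElt J G (ULift.up n))) := by
    intro n n' h
    by_contra hne
    have hF := congrArg (Quot.lift (fun a => fun i => chi J G i a)
      (fun a b hab => funext fun i => hinv a b hab i)) h
    simp only [Quot.lift_mk] at hF
    have h1 := congrFun hF (ULift.up n)
    rw [chi_tElt_same] at h1
    rw [chi_tElt_ne J G (by intro hh; exact hne (congrArg ULift.down hh))] at h1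
    exact absurd h1 (by decide)
  exact Infinite.of_injective _ hinj

/-! ### torsion -/

lemma finPerm_torsion (σ : ↥(finPerm J)) : ∃ n : ℕ, 0 < n ∧ σ ^ n = 1 := by
  classical
  set π : Equiv.Perm J := (σ : Equiv.Perm J) with hπ
  set S : Set J := {x | π x ≠ x} with hS
  have hSfin : S.Finite := σ.2
  have hsupp : ∀ n : ℕ, ∀ x : J, x ∉ S → (π ^ n) x = x := by
    intro n
    induction n with
    | zero => intro x _; rfl
    | succ k ih =>
        intro x hx
        have hfix : π x = x := not_not.mp (fun h => hx h)
        rw [pow_succ, Equiv.Perm.mul_apply, hfix, ih x hx]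
  have hstep : ∀ x : J, x ∈ S → π x ∈ S := by
    intro x hx
    simp only [hS, Set.mem_setOf_eq] at hx ⊢
    intro h
    exact hx (π.injective h)
  have hmem : ∀ (k : ℕ) (x : J), x ∈ S → (π ^ k) x ∈ S := by
    intro k
    induction k with
    | zero => intro x hx; exact hx
    | succ k ih =>
        intro x hx
        rw [pow_succ, Equiv.Perm.mul_apply]
        exact ih (π x) (hstep x hx)
  haveI : Finite ↥S := hSfin.to_subtype
  obtain ⟨a, b, hab, heq⟩ := Finite.exists_ne_map_eq_of_infinite
    (fun (k : ℕ) => (fun (x : ↥S) => (⟨(π ^ k) x.1, hmem k x.1 x.2⟩ : ↥S)))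
  wlog hlt : a < b generalizing a b
  · exact this b a hab.symm heq.symm (by omega)
  have hpow : π ^ a = π ^ b := by
    apply Equiv.ext
    intro x
    by_cases hx : x ∈ S
    · exact congrArg Subtype.val (congrFun heq (⟨x, hx⟩ : ↥S))
    · rw [hsupp a x hx, hsupp b x hx]
  refine ⟨b - a, by omega, ?_⟩
  apply Subtype.ext
  rw [show ((σ ^ (b - a) : ↥(finPerm J)) : Equiv.Perm J) = π ^ (b - a) from
    SubmonoidClass.coe_pow σ (b - a)]
  have : π ^ a * π ^ (b - a) = π ^ a * 1 := by
    rw [← pow_add, mul_one]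
    rw [show a + (b - a) = b from by omega, hpow]
  have h2 := mul_left_cancel this
  rw [h2]
  rfl

lemma base_torsion (htor : Monoid.IsTorsion G) (f : ↥(BaseSub J G)) :
    ∃ n : ℕ, 0 < n ∧ f ^ n = 1 := by
  classical
  refine ⟨∏ x ∈ f.2.toFinset, orderOf ((f : J → G) x), ?_, ?_⟩
  · apply Finset.prod_pos
    intro x _
    exact (htor _).orderOf_pos
  · apply Subtype.ext
    rw [SubmonoidClass.coe_pow]
    funext x
    rw [Pi.pow_apply]
    by_cases hx : (f : J → G) x = 1
    · rw [hx, one_pow]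
      rfl
    · have hmem : x ∈ f.2.toFinset := by
        refine (Set.Finite.mem_toFinset f.2).mpr ?_
        exact hx
      have hdvd : orderOf ((f : J → G) x) ∣
          ∏ y ∈ f.2.toFinset, orderOf ((f : J → G) y) :=
        Finset.dvd_prod_of_mem _ hmem
      rw [orderOf_dvd_iff_pow_eq_one.mp hdvd]
      rfl

lemma D_torsion (e : D.{u}) : ∃ n : ℕ, 0 < n ∧ e ^ n = 1 := by
  classical
  refine ⟨∏ j ∈ e.2.toFinset, (2 * pr j.down), ?_, ?_⟩
  · apply Finset.prod_pos
    intro j _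
    have := pr_pos j.down
    omega
  · apply Subtype.ext
    rw [SubmonoidClass.coe_pow]
    funext j
    rw [Pi.pow_apply]
    by_cases hj : (e : ∀ k : ι.{u}, DD k) j = 1
    · rw [hj, one_pow]
      rfl
    · have hmem : j ∈ e.2.toFinset := by
        refine (Set.Finite.mem_toFinset e.2).mpr ?_
        exact hj
      obtain ⟨t, ht⟩ := Finset.dvd_prod_of_mem (fun j : ι.{u} => 2 * pr j.down) hmem
      rw [ht, pow_mul, dih_pow_two_mul, one_pow]
      rfl

lemma W_torsion (htor : Monoid.IsTorsion G) (x : W J G) :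
    ∃ n : ℕ, 0 < n ∧ x ^ n = 1 := by
  obtain ⟨n, hn, hσ⟩ := finPerm_torsion J x.right
  have h1 : (x ^ n).right = 1 := by
    rw [show (x ^ n).right = (SemidirectProduct.rightHom (x ^ n) : ↥(finPerm J)) from rfl,
      map_pow]
    rw [show (SemidirectProduct.rightHom x : ↥(finPerm J)) = x.right from rfl, hσ]
  have h2 : x ^ n = SemidirectProduct.inl ((x ^ n).left) := by
    ext
    · rfl
    · rw [h1]
      rfl
  obtain ⟨m, hm, hf⟩ := base_torsion J G htor ((x ^ n).left)
  refine ⟨n * m, by positivity, ?_⟩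
  rw [pow_mul, h2, ← map_pow, hf, map_one]

lemma bigH_torsion (htor : Monoid.IsTorsion G) : Monoid.IsTorsion (BigH J G) := by
  intro x
  obtain ⟨n, hn, h1⟩ := W_torsion J G htor x.1
  obtain ⟨m, hm, h2⟩ := D_torsion x.2
  rw [isOfFinOrder_iff_pow_eq_one]
  refine ⟨n * m, by positivity, ?_⟩
  apply Prod.ext
  · rw [fst_pow', pow_mul, h1, one_pow]
    rfl
  · rw [snd_pow, mul_comm, pow_mul, h2, one_pow]
    rfl


/-! ### cardinality -/

open Cardinal in
lemma mk_fun_finite_le {S V : Type v} [Finite S] : #(S → V) ≤ max ℵ₀ #V := by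
  cases finite_or_infinite V
  · exact le_max_of_le_left (Cardinal.mk_le_aleph0)
  · refine le_max_of_le_right ?_
    rw [show #(S → V) = #V ^ #S from (Cardinal.power_def V S).symm]
    exact Cardinal.pow_le (Cardinal.aleph0_le_mk V) (Cardinal.lt_aleph0_of_finite S)

open Cardinal in
lemma mk_finsupport_le {Jv V : Type v} (v₀ : Jv → V) :
    #{f : Jv → V // {x | f x ≠ v₀ x}.Finite} ≤ #(Finset Jv) * max ℵ₀ #V := by
  classical
  have hsub : ∀ S : Finset Jv, #({f : Jv → V | ∀ x ∉ S, f x = v₀ x}) ≤ max ℵ₀ #V := by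
    intro S
    have hinj : Function.Injective
        (fun (f : ({f : Jv → V | ∀ x ∉ S, f x = v₀ x} : Set (Jv → V))) (x : ↥S) =>
          f.1 x.1) := by
      intro f g h
      apply Subtype.ext
      funext x
      by_cases hx : x ∈ S
      · exact congrFun h ⟨x, hx⟩
      · rw [f.2 x hx, g.2 x hx]
    exact (Cardinal.mk_le_of_injective hinj).trans mk_fun_finite_le
  have hset : {f : Jv → V | {x | f x ≠ v₀ x}.Finite} =
      ⋃ S : Finset Jv, {f : Jv → V | ∀ x ∉ S, f x = v₀ x} := by
    ext f
    simp only [Set.mem_setOf_eq, Set.mem_iUnion]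
    constructor
    · intro hf
      refine ⟨hf.toFinset, fun x hx => ?_⟩
      by_contra hxx
      exact hx (by rw [Set.Finite.mem_toFinset]; exact hxx)
    · rintro ⟨S, hS⟩
      refine S.finite_toSet.subset ?_
      intro x hx
      simp only [Set.mem_setOf_eq] at hx
      by_contra hxx
      exact hx (hS x (by simpa using hxx))
  calc #{f : Jv → V // {x | f x ≠ v₀ x}.Finite}
      = #(↥(⋃ S : Finset Jv, {f : Jv → V | ∀ x ∉ S, f x = v₀ x})) := by
        rw [← hset]; rfl
    _ ≤ Cardinal.sum (fun S : Finset Jv => #({f : Jv → V | ∀ x ∉ S, f x = v₀ x})) :=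
        Cardinal.mk_iUnion_le_sum_mk
    _ ≤ Cardinal.sum (fun _ : Finset Jv => max ℵ₀ #V) := Cardinal.sum_le_sum _ _ hsub
    _ = #(Finset Jv) * max ℵ₀ #V := Cardinal.sum_const' _ _

open Cardinal in
lemma mk_base_le : #(↥(BaseSub J G)) ≤ #(Finset J) * max ℵ₀ #G := by
  refine le_trans ?_ (mk_finsupport_le (fun _ : J => (1 : G)))
  apply Cardinal.mk_le_of_injective (f := fun f => ⟨f.1, f.2⟩)
  intro f g h
  exact Subtype.ext (congrArg Subtype.val h)

open Cardinal in
lemma mk_finPerm_le : #(↥(finPerm J)) ≤ #(Finset J) * max ℵ₀ #J := by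
  refine le_trans ?_ (mk_finsupport_le (fun x : J => x))
  have hinj : Function.Injective (fun σ : ↥(finPerm J) =>
      (⟨fun x : J => (σ : Equiv.Perm J) x, σ.2⟩ :
        {f : J → J // {x | f x ≠ x}.Finite})) := by
    intro σ τ h
    apply Subtype.ext
    apply Equiv.ext
    intro x
    exact congrFun (congrArg Subtype.val h) x
  exact Cardinal.mk_le_of_injective hinj

open Cardinal in
lemma mk_D_le : #(D.{u}) ≤ ℵ₀ := by
  classical
  have hfin : ∀ e : D.{u},
      {x : ι.{u} | (⟨x, (e : ∀ k : ι.{u}, DD k) x⟩ : Σ k : ι.{u}, DD k)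
        ≠ (⟨x, 1⟩ : Σ k : ι.{u}, DD k)}.Finite := by
    intro e
    refine e.2.subset ?_
    intro j hj
    simp only [Set.mem_setOf_eq] at hj ⊢
    intro h1
    exact hj (by rw [h1])
  have hinj : Function.Injective (fun (e : D.{u}) =>
      (⟨fun j : ι.{u} => ⟨j, (e : ∀ k : ι.{u}, DD k) j⟩, hfin e⟩ :
        {f : ι.{u} → Σ k : ι.{u}, DD k //
          {x | f x ≠ (fun j : ι.{u} => (⟨j, 1⟩ : Σ k : ι.{u}, DD k)) x}.Finite})) := by
    intro e e' h
    apply Subtype.ext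
    funext j
    have h2 := congrFun (congrArg Subtype.val h) j
    simpa using h2
  have h1 := (Cardinal.mk_le_of_injective hinj).trans
    (mk_finsupport_le (fun j : ι.{u} => (⟨j, 1⟩ : Σ k : ι.{u}, DD k)))
  have hc1 : #(Finset ι.{u}) ≤ ℵ₀ := Cardinal.mk_le_aleph0
  have hc2 : #(Σ k : ι.{u}, DD k) ≤ ℵ₀ := Cardinal.mk_le_aleph0
  calc #(D.{u}) ≤ #(Finset ι.{u}) * max ℵ₀ #(Σ k : ι.{u}, DD k) := h1
    _ ≤ ℵ₀ * ℵ₀ := mul_le_mul' hc1 (max_le le_rfl hc2)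
    _ = ℵ₀ := Cardinal.aleph0_mul_aleph0

def sdEquivProd {N Gr : Type*} [Group N] [Group Gr] (ψ : Gr →* MulAut N) :
    (N ⋊[ψ] Gr) ≃ N × Gr where
  toFun x := (x.left, x.right)
  invFun p := ⟨p.1, p.2⟩
  left_inv x := rfl
  right_inv p := rfl

open Cardinal in
lemma mk_W : #(W J G) = #(↥(BaseSub J G)) * #(↥(finPerm J)) := by
  rw [Cardinal.mk_congr (sdEquivProd (act J G)), Cardinal.mk_prod,
    Cardinal.lift_id, Cardinal.lift_id]

/-! ### embedding of G -/

def embedG [DecidableEq J] (j0 : J) : G →* ↥(BaseSub J G) where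
  toFun g := ⟨Pi.mulSingle j0 g, mulSingle_mem (M := fun _ : J => G) j0 g⟩
  map_one' := Subtype.ext (Pi.mulSingle_one j0)
  map_mul' := by
    intro g h
    apply Subtype.ext
    rw [Subgroup.coe_mul]
    exact Pi.mulSingle_mul (f := fun _ : J => G) j0 g h

def embedFull [DecidableEq J] (j0 : J) : G →* BigH J G :=
  (MonoidHom.inl (W J G) D.{u}).comp
    ((SemidirectProduct.inl (φ := act J G)).comp (embedG J G j0))

lemma embedFull_injective [DecidableEq J] (j0 : J) :
    Function.Injective (embedFull J G j0) := by
  intro g h hgh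
  have h1 := congrArg Prod.fst hgh
  have h2 := SemidirectProduct.inl_injective h1
  have h3 := congrFun (congrArg Subtype.val h2) j0
  simpa [embedG, Pi.mulSingle_eq_same] using h3

end RInfC

end

open Cardinal in
/-- For any torsion group `G` and any infinite cardinal `α ≥ #G`, there is a torsion group
of cardinality `α` with the `R∞` property containing an isomorphic copy of `G`. -/
theorem exists_torsion_rinfinity_of_card {G : Type u} [Group G]
    (htor : Monoid.IsTorsion G) (α : Cardinal.{u})
    (hα : Cardinal.aleph0 ≤ α) (hGα : Cardinal.mk G ≤ α) :
    ∃ (H : Type u) (_ : Group H), Cardinal.mk H = α ∧ Monoid.IsTorsion H ∧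
      RInfinity H ∧ ∃ f : G →* H, Function.Injective f := by
  classical
  set J : Type u := α.out with hJ
  have hmkJ : #J = α := Cardinal.mk_out α
  haveI hInf : Infinite J := Cardinal.infinite_iff.mpr (by rw [hmkJ]; exact hα)
  obtain ⟨j0⟩ : Nonempty J := inferInstance
  refine ⟨RInfC.BigH J G, inferInstance, ?_, RInfC.bigH_torsion J G htor,
    RInfC.rinf_BigH J G, RInfC.embedFull J G j0, RInfC.embedFull_injective J G j0⟩
  apply le_antisymm
  · have hFinJ : #(Finset J) = #J := Cardinal.mk_finset_of_infinite J
    have hW : #(RInfC.W J G) ≤ α := by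
      rw [RInfC.mk_W]
      have h1 : #(↥(RInfC.BaseSub J G)) ≤ α := by
        refine (RInfC.mk_base_le J G).trans ?_
        rw [hFinJ, hmkJ]
        have hm : max ℵ₀ #G ≤ α := max_le hα hGα
        calc α * max ℵ₀ #G ≤ α * α := mul_le_mul_right hm α
          _ = α := Cardinal.mul_eq_self hα
      have h2 : #(↥(RInfC.finPerm J)) ≤ α := by
        refine (RInfC.mk_finPerm_le J).trans ?_
        rw [hFinJ, hmkJ]
        have hm : max ℵ₀ α ≤ α := max_le hα le_rfl
        calc α * max ℵ₀ α ≤ α * α := mul_le_mul_right hm α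
          _ = α := Cardinal.mul_eq_self hα
      calc #(↥(RInfC.BaseSub J G)) * #(↥(RInfC.finPerm J)) ≤ α * α := mul_le_mul' h1 h2
        _ = α := Cardinal.mul_eq_self hα
    have hD : #(RInfC.D.{u}) ≤ α := RInfC.mk_D_le.trans hα
    calc #(RInfC.BigH J G) = #(RInfC.W J G) * #(RInfC.D.{u}) := by
          rw [Cardinal.mk_prod, Cardinal.lift_id, Cardinal.lift_id]
      _ ≤ α * α := mul_le_mul' hW hD
      _ = α := Cardinal.mul_eq_self hα
  · rw [← hmkJ]
    have hinj : Function.Injective (fun j : J =>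
        ((SemidirectProduct.inr (⟨Equiv.swap j0 j, RInfC.swap_mem_finPerm J j0 j⟩ :
          ↥(RInfC.finPerm J)) : RInfC.W J G), (1 : RInfC.D.{u}))) := by
      intro a b h
      have h1 := congrArg Prod.fst h
      have h2 := congrArg SemidirectProduct.right h1
      have h3 := congrArg Subtype.val h2
      have h4 := congrArg (fun e : Equiv.Perm J => e j0) h3
      simpa [Equiv.swap_apply_left] using h4
    exact Cardinal.mk_le_of_injective hinj
end

section
/- Let G be a finitely generated group such that G has the R_∞ property and every finite-index subgroup of G has the R_∞ property. Then every group commensurable to G has the R_∞ property. -/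
/-- Two groups are commensurable if they have isomorphic finite-index normal subgroups. -/
def Commensurable' (G H : Type*) [Group G] [Group H] : Prop :=
  ∃ (NG : Subgroup G) (NH : Subgroup H), NG.Normal ∧ NH.Normal ∧
    NG.FiniteIndex ∧ NH.FiniteIndex ∧ Nonempty (↥NG ≃* ↥NH)

/-- Twisted conjugacy is an equivalence relation. -/
lemma twistedConj_equivalence {G : Type*} [Group G] (φ : G ≃* G) :
    Equivalence (TwistedConj φ) := by
  constructor
  · intro a; exact ⟨1, by simp⟩
  · rintro a b ⟨x, rfl⟩
    exact ⟨x⁻¹, by simp [mul_assoc]⟩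
  · rintro a b c ⟨x, rfl⟩ ⟨y, rfl⟩
    exact ⟨x * y, by simp [mul_assoc]⟩

lemma twistedConj_of_quot_eq {G : Type*} [Group G] {φ : G ≃* G} {a b : G}
    (h : Quot.mk (TwistedConj φ) a = Quot.mk (TwistedConj φ) b) : TwistedConj φ a b :=
  ((twistedConj_equivalence φ).eqvGen_iff).mp (Quot.eq.mp h)

/-- The `R∞` property transfers along group isomorphisms. -/
lemma rInfinity_of_mulEquiv {A B : Type*} [Group A] [Group B] (e : A ≃* B)
    (h : RInfinity B) : RInfinity A := by
  intro φ
  set ψ : B ≃* B := (e.symm.trans φ).trans e with hψ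
  have key : ∀ a b : A, TwistedConj φ a b → TwistedConj ψ (e a) (e b) := by
    rintro a b ⟨x, rfl⟩
    refine ⟨e x, ?_⟩
    simp [hψ, MulEquiv.trans_apply]
  let F : Quot (TwistedConj φ) → Quot (TwistedConj ψ) := Quot.map e key
  have hsurj : Function.Surjective F := by
    rintro ⟨b⟩
    exact ⟨Quot.mk _ (e.symm b), by simp [F, Quot.map]⟩
  haveI := h ψ
  exact Infinite.of_surjective F hsurj

/-- A group with a finitely generated subgroup of finite index is finitely generated. -/
lemma group_fg_of_fg_finiteIndex {K : Type*} [Group K] (N : Subgroup K)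
    [N.FiniteIndex] (h : Group.FG ↥N) : Group.FG K := by
  obtain ⟨S, hS, hSfin⟩ := Group.fg_iff.mp h
  rw [Group.fg_iff]
  refine ⟨(Subtype.val '' S) ∪ Set.range (fun q : K ⧸ N => q.out), ?_, ?_⟩
  · rw [eq_top_iff]
    intro k _
    have h1 : (QuotientGroup.mk k : K ⧸ N).out⁻¹ * k ∈ N := by
      rw [← QuotientGroup.eq]
      exact (QuotientGroup.mk k).out_eq
    have hN : (N : Set K) ⊆ (Subgroup.closure ((Subtype.val '' S) ∪
        Set.range (fun q : K ⧸ N => q.out)) : Set K) := by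
      intro x hx
      have : x ∈ Subgroup.closure (Subtype.val '' S) := by
        have hmc := MonoidHom.map_closure N.subtype S
        have hx' : x ∈ (Subgroup.closure S).map N.subtype := by
          rw [hS]
          exact ⟨⟨x, hx⟩, trivial, rfl⟩
        rw [hmc] at hx'
        exact hx'
      exact Subgroup.closure_mono Set.subset_union_left this
    have h2 : (QuotientGroup.mk k : K ⧸ N).out ∈ Subgroup.closure
        ((Subtype.val '' S) ∪ Set.range (fun q : K ⧸ N => q.out)) :=
      Subgroup.subset_closure (Or.inr ⟨_, rfl⟩)
    have := mul_mem h2 (hN h1)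
    simpa using this
  · exact (hSfin.image _).union (Set.finite_range _)

/-- There are only finitely many homomorphisms from a finitely generated group
to a finite monoid. -/
lemma finite_monoidHom {K M : Type*} [Group K] [Monoid M] (hfg : Group.FG K)
    [Finite M] : Finite (K →* M) := by
  obtain ⟨S, hS, hSfin⟩ := Group.fg_iff.mp hfg
  haveI := hSfin.to_subtype
  refine Finite.of_injective (fun f => (fun s : S => f s)) ?_
  intro f g hfg'
  refine MonoidHom.eq_of_eqOn_dense hS ?_
  intro x hx
  exact congrFun hfg' ⟨x, hx⟩

open scoped Classical in
/-- A finitely generated group has only finitely many subgroups of a given finite index. -/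
lemma finite_subgroups_of_index_eq {K : Type*} [Group K] (hfg : Group.FG K)
    (n : ℕ) (hn : n ≠ 0) : Finite {H : Subgroup K // H.index = n} := by
  haveI : Finite (K →* Equiv.Perm (Fin n)) := finite_monoidHom hfg
  have key : ∀ H : {H : Subgroup K // H.index = n},
      ∃ p : (K →* Equiv.Perm (Fin n)) × Fin n,
        ∀ k : K, k ∈ H.1 ↔ p.1 k p.2 = p.2 := by
    rintro ⟨H, hH⟩
    haveI : H.FiniteIndex := ⟨hH ▸ hn⟩
    haveI : Finite (K ⧸ H) := H.finite_quotient_of_finiteIndex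
    haveI : Fintype (K ⧸ H) := Fintype.ofFinite _
    have hcard : Fintype.card (K ⧸ H) = n := by
      rw [← Nat.card_eq_fintype_card]
      exact hH
    let e : K ⧸ H ≃ Fin n := Fintype.equivFinOfCardEq hcard
    let f : K →* Equiv.Perm (Fin n) :=
      { toFun := fun k => e.permCongr (MulAction.toPermHom K (K ⧸ H) k)
        map_one' := by ext i; simp
        map_mul' := by intro a b; ext i; simp [mul_smul] }
    refine ⟨(f, e (QuotientGroup.mk 1)), ?_⟩
    intro k
    have : f k (e (QuotientGroup.mk 1)) = e (k • (QuotientGroup.mk 1 : K ⧸ H)) := by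
      simp [f]
    rw [this]
    constructor
    · intro hk
      congr 1
      have : k • (QuotientGroup.mk 1 : K ⧸ H) = QuotientGroup.mk k := by
        rw [MulAction.Quotient.smul_mk]; simp
      rw [this, QuotientGroup.eq]
      simpa using (inv_mem hk)
    · intro hk
      have h2 := e.injective hk
      have : k • (QuotientGroup.mk 1 : K ⧸ H) = QuotientGroup.mk k := by
        rw [MulAction.Quotient.smul_mk]; simp
      rw [this] at h2
      have := QuotientGroup.eq.mp h2
      simpa using this
  choose p hp using key
  refine Finite.of_injective p ?_
  intro H H' hHH'
  ext k
  rw [hp H k, hp H' k, hHH']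

open scoped Classical in
/-- If a finite-index subgroup invariant under `φ` has the `R∞` property (as an abstract
group), then `φ` has infinitely many twisted conjugacy classes. -/
lemma infinite_quot_of_invariant_subgroup {K : Type*} [Group K] (φ : K ≃* K)
    (L : Subgroup K) [L.FiniteIndex] (hL : ∀ x : K, φ x ∈ L ↔ x ∈ L)
    (hinf : RInfinity ↥L) : Infinite (Quot (TwistedConj φ)) := by
  let ψ : ↥L ≃* ↥L :=
    { toFun := fun u => ⟨φ u, (hL u).mpr u.2⟩
      invFun := fun u => ⟨φ.symm u, by
        have := (hL (φ.symm u)).mp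
        simp only [MulEquiv.apply_symm_apply] at this
        exact this u.2⟩
      left_inv := fun u => by ext; simp
      right_inv := fun u => by ext; simp
      map_mul' := fun u v => by ext; simp }
  have hψcoe : ∀ u : ↥L, (ψ u : K) = φ u := fun u => rfl
  haveI hQ : Infinite (Quot (TwistedConj ψ)) := hinf ψ
  have key : ∀ a b : ↥L, TwistedConj ψ a b → TwistedConj φ (a : K) (b : K) := by
    rintro a b ⟨x, hx⟩
    refine ⟨(x : K), ?_⟩
    have := congrArg (Subtype.val) hx
    simpa [hψcoe] using this
  let F : Quot (TwistedConj ψ) → Quot (TwistedConj φ) :=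
    Quot.map Subtype.val key
  have hfib : ∀ q : Quot (TwistedConj φ), Finite {p : Quot (TwistedConj ψ) // F p = q} := by
    intro q
    by_cases hne : Nonempty {p : Quot (TwistedConj ψ) // F p = q}
    · obtain ⟨s₀⟩ := hne
      obtain ⟨b₀, hb₀⟩ := Quot.exists_rep s₀.1
      have hwit : ∀ s : {p : Quot (TwistedConj ψ) // F p = q},
          ∃ (b : ↥L) (x : K), Quot.mk (TwistedConj ψ) b = s.1 ∧
            (φ x)⁻¹ * (b₀ : K) * x = (b : K) := by
        intro s
        obtain ⟨b, hb⟩ := Quot.exists_rep s.1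
        have hq : Quot.mk (TwistedConj φ) (b₀ : K) = Quot.mk (TwistedConj φ) (b : K) := by
          have h1 : F (Quot.mk (TwistedConj ψ) b₀) = Quot.mk (TwistedConj φ) (b₀ : K) := rfl
          have h2 : F (Quot.mk (TwistedConj ψ) b) = Quot.mk (TwistedConj φ) (b : K) := rfl
          rw [← h1, ← h2, hb₀, hb, s₀.2, s.2]
        obtain ⟨x, hx⟩ := twistedConj_of_quot_eq hq
        exact ⟨b, x, hb, hx⟩
      choose bfun xfun hbfun hxfun using hwit
      haveI : Finite (K ⧸ L) := L.finite_quotient_of_finiteIndex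
      refine Finite.of_injective
        (fun s => (QuotientGroup.mk (xfun s) : K ⧸ L)) ?_
      intro s s' hss'
      have hu : (xfun s)⁻¹ * xfun s' ∈ L := QuotientGroup.eq.mp hss'
      have hrel : TwistedConj ψ (bfun s) (bfun s') := by
        refine ⟨⟨(xfun s)⁻¹ * xfun s', hu⟩, ?_⟩
        have h1 := hxfun s
        have h2 := hxfun s'
        ext
        show (φ ((xfun s)⁻¹ * xfun s'))⁻¹ * (bfun s : K) * ((xfun s)⁻¹ * xfun s') = (bfun s' : K)
        rw [← h2, ← h1]
        simp only [map_mul, map_inv]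
        group
      have : s.1 = s'.1 := by
        rw [← hbfun s, ← hbfun s']
        exact Quot.sound hrel
      exact Subtype.ext this
    · rw [not_nonempty_iff] at hne
      exact Finite.of_subsingleton
  by_contra hfin
  rw [not_infinite_iff_finite] at hfin
  haveI := hfin
  haveI : Finite ((q : Quot (TwistedConj φ)) × {p : Quot (TwistedConj ψ) // F p = q}) := by
    haveI := hfib
    infer_instance
  have : Finite (Quot (TwistedConj ψ)) := by
    refine Finite.of_injective
      (fun p => (⟨F p, p, rfl⟩ :
        (q : Quot (TwistedConj φ)) × {p : Quot (TwistedConj ψ) // F p = q})) ?_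
    intro p p' h
    exact congrArg
      (fun z : (q : Quot (TwistedConj φ)) × {p : Quot (TwistedConj ψ) // F p = q} => z.2.1) h
  exact absurd this hQ.not_finite

/-- If a finitely generated group `G` and all its finite-index subgroups have the `R∞`
property, then every group commensurable to `G` has the `R∞` property. -/
theorem rinfinity_of_commensurable {G : Type*} [Group G] (hfg : Group.FG G)
    (hG : RInfinity G) (hsub : ∀ H : Subgroup G, H.FiniteIndex → RInfinity ↥H)
    {K : Type*} [Group K] (hcom : Commensurable' K G) :
    RInfinity K := by
  classical
  obtain ⟨NK, NG, hNKn, hNGn, hNKfi, hNGfi, ⟨e⟩⟩ := hcom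
  haveI := hfg
  haveI := hNKfi
  haveI := hNGfi
  haveI hNGfg : Group.FG ↥NG := inferInstance
  have hNKfg : Group.FG ↥NK :=
    Group.fg_of_surjective (f := e.symm.toMonoidHom) e.symm.surjective
  have hKfg : Group.FG K := group_fg_of_fg_finiteIndex NK hNKfg
  intro φ
  set n := NK.index with hn_def
  have hn : n ≠ 0 := hNKfi.index_ne_zero
  haveI hfin : Finite {H : Subgroup K // H.index = n} :=
    finite_subgroups_of_index_eq hKfg n hn
  set L : Subgroup K := ⨅ H : {H : Subgroup K // H.index = n}, (H : Subgroup K) with hL_def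
  have hmemL : ∀ x : K, x ∈ L ↔ ∀ H : {H : Subgroup K // H.index = n}, x ∈ H.1 :=
    fun x => Subgroup.mem_iInf
  haveI hLfi : L.FiniteIndex :=
    Subgroup.finiteIndex_iInf (fun H => ⟨by rw [H.2]; exact hn⟩)
  have hLle : L ≤ NK := iInf_le (fun H : {H : Subgroup K // H.index = n} => (H : Subgroup K))
    ⟨NK, rfl⟩
  have hcomap : ∀ (ρ : K ≃* K) (H : Subgroup K), H.index = n →
      (H.comap ρ.toMonoidHom).index = n := by
    intro ρ H hH
    rw [Subgroup.index_comap_of_surjective _ ρ.surjective, hH]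
  have hL : ∀ x : K, φ x ∈ L ↔ x ∈ L := by
    intro x
    rw [hmemL, hmemL]
    constructor
    · intro h H
      have := h ⟨H.1.comap φ.symm.toMonoidHom, hcomap φ.symm H.1 H.2⟩
      simpa using this
    · intro h H
      have := h ⟨H.1.comap φ.toMonoidHom, hcomap φ H.1 H.2⟩
      simpa using this
  -- Transport `R∞` from the corresponding finite-index subgroup of `G` to `L`
  set L₁ : Subgroup ↥NK := L.subgroupOf NK with hL1_def
  have e₁ : ↥L₁ ≃* ↥L := Subgroup.subgroupOfEquivOfLe hLle
  set L₂ : Subgroup ↥NG := L₁.map e.toMonoidHom with hL2_def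
  have e₂ : ↥L₁ ≃* ↥L₂ := e.subgroupMap L₁
  set M : Subgroup G := L₂.map NG.subtype with hM_def
  have e₃ : ↥L₂ ≃* ↥M := L₂.equivMapOfInjective NG.subtype NG.subtype_injective
  have hLidx : L.index ≠ 0 := hLfi.index_ne_zero
  have hL1idx : L₁.index ≠ 0 := by
    have hrm := Subgroup.relIndex_mul_index hLle
    intro h0
    have : L.relIndex NK = L₁.index := rfl
    rw [this, h0, zero_mul] at hrm
    exact hLidx hrm.symm
  have hL2idx : L₂.index = L₁.index := by
    have h1 := Subgroup.index_comap_of_surjective (H := L₂) (f := e.toMonoidHom) e.surjective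
    rw [hL2_def, Subgroup.comap_map_eq_self_of_injective e.injective] at h1
    exact h1.symm
  have hMle : M ≤ NG := Subgroup.map_subtype_le L₂
  have hMidx : M.index ≠ 0 := by
    have hrm := Subgroup.relIndex_mul_index hMle
    have hrel : M.relIndex NG = L₂.index := by
      show (M.subgroupOf NG).index = L₂.index
      rw [hM_def]
      congr 1
      exact Subgroup.comap_map_eq_self_of_injective NG.subtype_injective L₂
    rw [hrel, hL2idx] at hrm
    rw [← hrm]
    exact Nat.mul_ne_zero hL1idx hNGfi.index_ne_zero
  have hRM : RInfinity ↥M := hsub M ⟨hMidx⟩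
  have hRL : RInfinity ↥L := rInfinity_of_mulEquiv ((e₁.symm.trans e₂).trans e₃) hRM
  exact infinite_quot_of_invariant_subgroup φ L hL hRL
end

section
/- There exist uncountably many pairwise non-isomorphic countable torsion groups each of which has the R_∞ property; i.e. there is an uncountable index type ι and a family of groups (G i) for i ∈ ι such that each G i is countable and torsion and has the R_∞ property, and G i ≅ G j implies i = j. -/
open Equiv

noncomputable section
namespace R8

def P (n : ℕ) : ℕ := Nat.nth Nat.Prime (n + 2)

lemma P_prime (n : ℕ) : (P n).Prime := Nat.prime_nth_prime (n+2)

lemma P_ge (n : ℕ) : n + 4 ≤ P n := Nat.add_two_le_nth_prime (n+2)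

lemma P_ge5 (n : ℕ) : 5 ≤ P n := by
  have h4 := P_ge n
  have hp := P_prime n
  rcases Nat.lt_or_ge (P n) 5 with h | h
  · have : P n = 4 := by omega
    rw [this] at hp; norm_num at hp
  · exact h

lemma P_strictMono : StrictMono P :=
  fun a b h => (Nat.nth_strictMono Nat.infinite_setOf_prime) (by omega)

instance P_fact (n : ℕ) : Fact (P n).Prime := ⟨P_prime n⟩

instance (n : ℕ) : NeZero (P n) := ⟨(P_prime n).ne_zero⟩

abbrev X (n : ℕ) := ZMod (P n)

/-- the affine permutation x ↦ u x + v of `ZMod (P n)` -/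
def aff (n : ℕ) (u : (X n)ˣ) (v : X n) : Equiv.Perm (X n) where
  toFun x := u * x + v
  invFun x := (u⁻¹ : (X n)ˣ) * (x - v)
  left_inv x := by field_simp; rw [add_sub_cancel_right, Units.inv_mul_cancel_left]
  right_inv x := by field_simp; rw [Units.mul_inv, one_mul, sub_add_cancel]

lemma aff_apply (n : ℕ) (u : (X n)ˣ) (v x : X n) : aff n u v x = u * x + v := rfl

lemma aff_mul (n : ℕ) (u u' : (X n)ˣ) (v v' : X n) :
    aff n u v * aff n u' v' = aff n (u * u') (u * v' + v) := by
  ext x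
  simp [aff_apply, Perm.mul_apply, mul_add, mul_assoc, add_assoc]

lemma aff_one (n : ℕ) : aff n 1 0 = 1 := by
  ext x; simp [aff_apply]

lemma aff_eq_iff (n : ℕ) {u u' : (X n)ˣ} {v v' : X n} :
    aff n u v = aff n u' v' ↔ u = u' ∧ v = v' := by
  constructor
  · intro h
    have h0 : aff n u v 0 = aff n u' v' 0 := by rw [h]
    have h1 : aff n u v 1 = aff n u' v' 1 := by rw [h]
    simp [aff_apply] at h0 h1
    refine ⟨Units.ext ?_, h0⟩
    subst h0; simpa using h1
  · rintro ⟨rfl, rfl⟩; rfl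

lemma aff_inv (n : ℕ) (u : (X n)ˣ) (v : X n) :
    (aff n u v)⁻¹ = aff n u⁻¹ (-((u⁻¹ : (X n)ˣ) * v)) := by
  rw [inv_eq_iff_mul_eq_one, aff_mul]
  rw [mul_inv_cancel]
  have : (u : X n) * -((u⁻¹ : (X n)ˣ) * v) + v = 0 := by
    rw [mul_neg, ← mul_assoc]
    norm_cast
    rw [mul_inv_cancel]
    simp
  rw [this, aff_one]

lemma aff_pow (n : ℕ) (v : X n) (k : ℕ) : (aff n 1 v) ^ k = aff n 1 (k * v) := by
  induction k with
  | zero => simp [aff_one]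
  | succ k ih =>
    rw [pow_succ, ih, aff_mul, aff_eq_iff]
    refine ⟨by simp, by push_cast; ring⟩


/-- Affine subgroup of Perm (X n) -/
def Aff (n : ℕ) : Subgroup (Equiv.Perm (X n)) where
  carrier := {e | ∃ u v, e = aff n u v}
  one_mem' := ⟨1, 0, (aff_one n).symm⟩
  mul_mem' := by
    rintro a b ⟨u, v, rfl⟩ ⟨u', v', rfl⟩
    exact ⟨u * u', u * v' + v, aff_mul n u u' v v'⟩
  inv_mem' := by
    rintro a ⟨u, v, rfl⟩
    exact ⟨u⁻¹, _, aff_inv n u v⟩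

/-- Dihedral subgroup: slopes ±1 -/
def Dih (n : ℕ) : Subgroup (Equiv.Perm (X n)) where
  carrier := {e | ∃ u v, (u = 1 ∨ u = -1) ∧ e = aff n u v}
  one_mem' := ⟨1, 0, Or.inl rfl, (aff_one n).symm⟩
  mul_mem' := by
    rintro a b ⟨u, v, hu, rfl⟩ ⟨u', v', hu', rfl⟩
    refine ⟨u * u', u * v' + v, ?_, aff_mul n u u' v v'⟩
    rcases hu with rfl | rfl <;> rcases hu' with rfl | rfl <;> simp
  inv_mem' := by
    rintro a ⟨u, v, hu, rfl⟩
    refine ⟨u⁻¹, _, ?_, aff_inv n u v⟩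
    rcases hu with rfl | rfl <;> simp

lemma dih_le_aff (n : ℕ) : Dih n ≤ Aff n := by
  rintro a ⟨u, v, _, rfl⟩; exact ⟨u, v, rfl⟩

abbrev Amb := ∀ n : ℕ, Equiv.Perm (X n)

open scoped Classical in
/-- per-index allowed subgroup -/
def W (S : Set ℕ) (n : ℕ) : Subgroup (Equiv.Perm (X n)) :=
  if n % 2 = 0 ∨ n / 2 ∈ S then Aff n else Dih n

lemma W_le_aff (S : Set ℕ) (n : ℕ) : W S n ≤ Aff n := by
  unfold W; split
  · exact le_rfl
  · exact dih_le_aff n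

lemma aff_one_mem_W (S : Set ℕ) (n : ℕ) (v : X n) : aff n 1 v ∈ W S n := by
  unfold W; split
  · exact ⟨1, v, rfl⟩
  · exact ⟨1, v, Or.inl rfl, rfl⟩

lemma aff_neg_one_mem_W (S : Set ℕ) (n : ℕ) (v : X n) : aff n (-1) v ∈ W S n := by
  unfold W; split
  · exact ⟨-1, v, rfl⟩
  · exact ⟨-1, v, Or.inr rfl, rfl⟩

lemma W_even (S : Set ℕ) (n : ℕ) (h : n % 2 = 0) : W S n = Aff n := by
  unfold W; rw [if_pos (Or.inl h)]

lemma W_odd_mem (S : Set ℕ) (k : ℕ) (h : k ∈ S) : W S (2*k+1) = Aff (2*k+1) := by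
  unfold W
  have hk : (2*k+1) / 2 = k := by omega
  rw [if_pos (Or.inr (by rw [hk]; exact h))]

lemma W_odd_not_mem (S : Set ℕ) (k : ℕ) (h : k ∉ S) : W S (2*k+1) = Dih (2*k+1) := by
  unfold W
  have hk : (2*k+1) / 2 = k := by omega
  rw [if_neg]
  push_neg
  exact ⟨by omega, by rw [hk]; exact h⟩

/-- support of an element of Amb -/
def supp (f : Amb) : Set ℕ := {n | f n ≠ 1}

/-- finitely supported elements -/
def FS : Subgroup Amb where
  carrier := {f : Amb | (supp f).Finite}
  one_mem' := by
    have : supp (1 : Amb) = ∅ := by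
      ext n; simp [supp]
    simp only [Set.mem_setOf_eq, this]
    exact Set.finite_empty
  mul_mem' := by
    intro a b ha hb
    refine Set.Finite.subset (Set.Finite.union ha hb) ?_
    intro n hn
    by_contra hc
    simp only [supp, Set.mem_union, Set.mem_setOf_eq, not_or, not_not] at hc
    simp only [supp, Set.mem_setOf_eq, Pi.mul_apply, hc.1, hc.2, one_mul] at hn
    exact hn rfl
  inv_mem' := by
    intro a ha
    refine Set.Finite.subset ha ?_
    intro n hn
    simp only [supp, Set.mem_setOf_eq] at hn ⊢
    intro hc
    rw [Pi.inv_apply, hc, inv_one] at hn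
    exact hn rfl

def GG (S : Set ℕ) : Subgroup Amb := FS ⊓ Subgroup.pi Set.univ (W S)

lemma mem_GG {S : Set ℕ} {f : Amb} :
    f ∈ GG S ↔ (supp f).Finite ∧ ∀ n, f n ∈ W S n := by
  constructor
  · rintro ⟨h1, h2⟩
    exact ⟨h1, fun n => h2 n (Set.mem_univ n)⟩
  · rintro ⟨h1, h2⟩
    exact ⟨h1, fun n _ => h2 n⟩

lemma single_mem_GG {S : Set ℕ} {n : ℕ} {e : Equiv.Perm (X n)} (h : e ∈ W S n) :
    Pi.mulSingle n e ∈ GG S := by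
  rw [mem_GG]
  constructor
  · refine Set.Finite.subset (Set.finite_singleton n) ?_
    intro m hm
    simp only [supp, Set.mem_setOf_eq] at hm
    by_contra hc
    rw [Pi.mulSingle_eq_of_ne hc] at hm
    exact hm rfl
  · intro m
    rcases eq_or_ne m n with rfl | hmn
    · rw [Pi.mulSingle_eq_same]; exact h
    · rw [Pi.mulSingle_eq_of_ne hmn]; exact one_mem _

/-- canonical single element -/
def sing (S : Set ℕ) (n : ℕ) (e : Equiv.Perm (X n)) (h : e ∈ W S n) : ↥(GG S) :=
  ⟨Pi.mulSingle n e, single_mem_GG h⟩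


/-- The key first-order property pinning down the canonical translations. -/
def Spec {G : Type*} [Group G] (p : ℕ) (x : G) : Prop :=
  orderOf x = p ∧ ∀ y : G, orderOf y = 2 → Commute y x → ∀ g : G, Commute y (g * x * g⁻¹)

lemma Spec.map {G H : Type*} [Group G] [Group H] (e : G ≃* H) {p : ℕ} {x : G}
    (h : Spec p x) : Spec p (e x) := by
  obtain ⟨h1, h2⟩ := h
  constructor
  · have hh : orderOf (e x) = orderOf x := orderOf_injective e.toMonoidHom e.injective x
    rw [hh]; exact h1
  · intro y hy hc g
    have hy' : orderOf (e.symm y) = 2 := by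
      have hh : orderOf (e.symm y) = orderOf y :=
        orderOf_injective e.symm.toMonoidHom e.symm.injective y
      rw [hh]; exact hy
    have hc' : Commute (e.symm y) x := by
      have := hc.map e.symm.toMonoidHom
      simpa using this
    have := (h2 (e.symm y) hy' hc' (e.symm g)).map e.toMonoidHom
    simpa [map_mul] using this

lemma orderOf_coe {S : Set ℕ} (x : ↥(GG S)) : orderOf (x : Amb) = orderOf x :=
  orderOf_injective (GG S).subtype Subtype.coe_injective x

lemma orderOf_component_dvd (x : Amb) (n : ℕ) : orderOf (x n) ∣ orderOf x :=
  orderOf_map_dvd (Pi.evalMonoidHom (fun n => Equiv.Perm (X n)) n) x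

lemma orderOf_single (n : ℕ) (e : Equiv.Perm (X n)) :
    orderOf (Pi.mulSingle n e : Amb) = orderOf e :=
  orderOf_injective (MonoidHom.mulSingle (fun n => Equiv.Perm (X n)) n)
    (fun a b hab => Pi.mulSingle_injective (M := fun n => Equiv.Perm (X n)) n hab) e

lemma aff_eq_one_iff (n : ℕ) {u : (X n)ˣ} {v : X n} : aff n u v = 1 ↔ u = 1 ∧ v = 0 := by
  rw [← aff_one n, aff_eq_iff]

lemma orderOf_aff_one {n : ℕ} {v : X n} (hv : v ≠ 0) : orderOf (aff n 1 v) = P n := by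
  apply orderOf_eq_prime
  · rw [aff_pow, ZMod.natCast_self, zero_mul, aff_one]
  · intro h
    exact hv ((aff_eq_one_iff n).mp h).2

/-- slopes as a homomorphism into the permutation group -/
def homU (n : ℕ) : (X n)ˣ →* Equiv.Perm (X n) where
  toFun u := aff n u 0
  map_one' := aff_one n
  map_mul' u u' := by rw [aff_mul, aff_eq_iff]; simp

lemma homU_injective (n : ℕ) : Function.Injective (homU n) := by
  intro u u' h
  exact ((aff_eq_iff n).mp h).1

lemma unit_coe_ne_one_sub {n : ℕ} {u : (X n)ˣ} (hu : u ≠ 1) : (1 : X n) - (u : X n) ≠ 0 := by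
  intro h
  apply hu
  apply Units.ext
  have : (u : X n) = 1 := by linear_combination -h
  simpa using this

lemma orderOf_aff_of_ne {n : ℕ} {u : (X n)ˣ} (hu : u ≠ 1) (v : X n) :
    orderOf (aff n u v) = orderOf u := by
  have hne := unit_coe_ne_one_sub hu
  set w : X n := (1 - (u : X n))⁻¹ * v with hw
  have hconj : aff n 1 w * aff n u 0 * (aff n 1 w)⁻¹ = aff n u v := by
    rw [aff_inv, aff_mul, aff_mul, aff_eq_iff]
    constructor
    · simp
    · simp only [Units.val_one, one_mul, inv_one, Units.val_one]
      rw [hw]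
      field_simp
      ring
  rw [← hconj]
  have h1 : orderOf (aff n 1 w * aff n u 0 * (aff n 1 w)⁻¹)
      = orderOf ((MulAut.conj (aff n 1 w)) (aff n u 0)) := rfl
  have h2 : orderOf ((MulAut.conj (aff n 1 w)) (aff n u 0)) = orderOf (aff n u 0) :=
    orderOf_injective (MulAut.conj (aff n 1 w)).toMonoidHom
      (MulAut.conj (aff n 1 w)).injective _
  have h3 : orderOf (homU n u) = orderOf u := orderOf_injective (homU n) (homU_injective n) u
  rw [h1, h2]
  exact h3

lemma commute_component {S : Set ℕ} {y x : ↥(GG S)} (h : Commute y x) (n : ℕ) :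
    Commute ((y : Amb) n) ((x : Amb) n) := by
  have : ((y * x : ↥(GG S)) : Amb) n = ((x * y : ↥(GG S)) : Amb) n := by rw [h]
  simp at this; exact this

lemma commute_of_components {S : Set ℕ} {y x : ↥(GG S)}
    (h : ∀ n, Commute ((y : Amb) n) ((x : Amb) n)) : Commute y x := by
  have : ((y * x : ↥(GG S)) : Amb) = ((x * y : ↥(GG S)) : Amb) := by
    funext n
    simpa using (h n).eq
  exact Subtype.ext this

lemma conj_component {S : Set ℕ} (g x : ↥(GG S)) (n : ℕ) :
    ((g * x * g⁻¹ : ↥(GG S)) : Amb) n = (g : Amb) n * (x : Amb) n * ((g : Amb) n)⁻¹ := by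
  simp


lemma comp_mem_W {S : Set ℕ} (x : ↥(GG S)) (n : ℕ) : (x : Amb) n ∈ W S n :=
  (mem_GG.mp x.2).2 n

lemma comp_mem {S : Set ℕ} (x : ↥(GG S)) (n : ℕ) : (x : Amb) n ∈ Aff n :=
  W_le_aff S n (comp_mem_W x n)

lemma two_ne_zero_X (n : ℕ) : (2 : X n) ≠ 0 := by
  have h : ((2 : ℕ) : X n) ≠ 0 := by
    rw [Ne, ZMod.natCast_eq_zero_iff]
    intro h
    have h1 := Nat.le_of_dvd (by norm_num) h
    have h2 := P_ge5 n
    omega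
  simpa using h

lemma three_ne_zero_X (n : ℕ) : (3 : X n) ≠ 0 := by
  have h : ((3 : ℕ) : X n) ≠ 0 := by
    rw [Ne, ZMod.natCast_eq_zero_iff]
    intro h
    have h1 := Nat.le_of_dvd (by norm_num) h
    have h2 := P_ge5 n
    omega
  simpa using h

lemma aff_commute_iff {n : ℕ} {u u' : (X n)ˣ} {v v' : X n} :
    Commute (aff n u v) (aff n u' v') ↔ (u : X n) * v' + v = (u' : X n) * v + v' := by
  rw [Commute, SemiconjBy, aff_mul, aff_mul, aff_eq_iff]
  constructor
  · rintro ⟨-, h⟩; exact h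
  · intro h; exact ⟨by rw [mul_comm], h⟩

lemma sing_coe {S : Set ℕ} {n : ℕ} {e : Equiv.Perm (X n)} (h : e ∈ W S n) :
    ((sing S n e h : ↥(GG S)) : Amb) = Pi.mulSingle n e := rfl

lemma spec_iff {S : Set ℕ} (n : ℕ) (x : ↥(GG S)) :
    Spec (P n) x ↔ ∃ v : X n, v ≠ 0 ∧ (x : Amb) = Pi.mulSingle n (aff n 1 v) := by
  constructor
  · rintro ⟨hord, hcomm⟩
    -- Step 1: components away from n vanish
    have hstep : ∀ m, m ≠ n → (x : Amb) m = 1 := by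
      intro m hmn
      by_contra hxm
      obtain ⟨u, v, hrep⟩ := comp_mem x m
      rcases eq_or_ne u 1 with rfl | hu
      · -- translation at the wrong index
        have hv : v ≠ 0 := by
          rintro rfl
          rw [aff_one] at hrep
          exact hxm hrep
        have h1 : orderOf ((x : Amb) m) = P m := by rw [hrep]; exact orderOf_aff_one hv
        have h2 : orderOf ((x : Amb) m) ∣ P n := by
          rw [← hord, ← orderOf_coe]
          exact orderOf_component_dvd _ m
        rw [h1] at h2
        have := (Nat.prime_dvd_prime_iff_eq (P_prime m) (P_prime n)).mp h2
        exact hmn (P_strictMono.injective this)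
      · -- nontrivial slope at some index: contradiction with the ∀-clause
        have hne := unit_coe_ne_one_sub hu
        set z : X m := (1 - (u : X m))⁻¹ * v with hz
        have hzv : (1 - (u : X m)) * z = v := by
          rw [hz, ← mul_assoc, mul_inv_cancel₀ hne, one_mul]
        have hymW : aff m (-1) (2*z) ∈ W S m := aff_neg_one_mem_W S m _
        set y : ↥(GG S) := sing S m (aff m (-1) (2*z)) hymW with hy
        have hycoe : (y : Amb) = Pi.mulSingle m (aff m (-1) (2*z)) := rfl
        have hy2 : orderOf y = 2 := by
          rw [← orderOf_coe, hycoe, orderOf_single]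
          have inst : Fact (Nat.Prime 2) := ⟨Nat.prime_two⟩
          apply orderOf_eq_prime
          · rw [pow_two, aff_mul, aff_eq_one_iff]
            constructor
            · simp
            · push_cast
              ring
          · rw [Ne, aff_eq_one_iff]
            rintro ⟨h1, -⟩
            have : ((-1 : (X m)ˣ) : X m) = ((1 : (X m)ˣ) : X m) := by rw [h1]
            simp only [Units.val_neg, Units.val_one] at this
            have h2 : (2 : X m) = 0 := by linear_combination -this
            exact two_ne_zero_X m h2
        have hcy : Commute y x := by
          apply commute_of_components
          intro m'
          rcases eq_or_ne m' m with rfl | hm'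
          · rw [hycoe, Pi.mulSingle_eq_same, hrep, aff_commute_iff]
            push_cast
            linear_combination (2 : X m') * hzv
          · rw [hycoe, Pi.mulSingle_eq_of_ne hm']
            exact Commute.one_left _
        have hgoal := hcomm y hy2 hcy (sing S m (aff m 1 1) (aff_one_mem_W S m 1))
        have hc := commute_component hgoal m
        have hgm : ((sing S m (aff m 1 1) (aff_one_mem_W S m 1) : ↥(GG S)) : Amb) m
            = aff m 1 1 := by
          rw [sing_coe, Pi.mulSingle_eq_same]
        rw [conj_component, hgm, hrep, hycoe, Pi.mulSingle_eq_same, aff_inv, aff_mul, aff_mul,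
          aff_commute_iff] at hc
        -- derive u = 1 from hc
        apply hu
        apply Units.ext
        rw [Units.val_one]
        push_cast at hc
        have h2 : (2 : X m) * ((u : X m) - 1) = 0 := by linear_combination hc - 2 * hzv
        rcases mul_eq_zero.mp h2 with h | h
        · exact absurd h (two_ne_zero_X m)
        · linear_combination h
    -- Step 2: x is a single
    have hxs : (x : Amb) = Pi.mulSingle n ((x : Amb) n) := by
      funext m
      rcases eq_or_ne m n with rfl | hmn
      · rw [Pi.mulSingle_eq_same]
      · rw [Pi.mulSingle_eq_of_ne hmn, hstep m hmn]
    -- Step 3: the component at n is a translation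
    obtain ⟨u, v, hrep⟩ := comp_mem x n
    have hordn : orderOf ((x : Amb) n) = P n := by
      rw [← hord, ← orderOf_coe, hxs, orderOf_single]
      rw [hxs, Pi.mulSingle_eq_same]
    rcases eq_or_ne u 1 with rfl | hu
    · refine ⟨v, ?_, ?_⟩
      · rintro rfl
        rw [hrep, aff_one, orderOf_one] at hordn
        have := (P_prime n).one_lt
        omega
      · rw [hxs, hrep]
    · exfalso
      rw [hrep, orderOf_aff_of_ne hu] at hordn
      have hdvd : orderOf u ∣ Fintype.card (X n)ˣ := orderOf_dvd_card
      rw [hordn, ZMod.card_units] at hdvd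
      have h5 := P_ge5 n
      have := Nat.le_of_dvd (by omega) hdvd
      omega
  · rintro ⟨v, hv, hx⟩
    constructor
    · rw [← orderOf_coe, hx, orderOf_single]
      exact orderOf_aff_one hv
    · intro y hy hc g
      -- the n-th component of y is trivial
      have hyn : (y : Amb) n = 1 := by
        obtain ⟨u', w', hrep⟩ := comp_mem y n
        have hcn := commute_component hc n
        rw [hx, Pi.mulSingle_eq_same, hrep, aff_commute_iff] at hcn
        -- slope is 1
        have hu' : u' = 1 := by
          apply Units.ext
          rw [Units.val_one]
          have h2 : ((u' : X n) - 1) * v = 0 := by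
            push_cast at hcn
            linear_combination hcn
          rcases mul_eq_zero.mp h2 with h | h
          · linear_combination h
          · exact absurd h hv
        subst hu'
        -- order 2 forces trivial translation part
        have hysq : ((y : Amb) n) ^ 2 = 1 := by
          have : (y : ↥(GG S)) ^ 2 = 1 := by
            rw [← hy]; exact pow_orderOf_eq_one y
          have hcoe : ((y ^ 2 : ↥(GG S)) : Amb) n = 1 := by rw [this]; rfl
          simpa using hcoe
        rw [hrep, pow_two, aff_mul, aff_eq_one_iff] at hysq
        obtain ⟨-, h2⟩ := hysq
        have hw' : w' = 0 := by
          have h3 : (2 : X n) * w' = 0 := by push_cast at h2; linear_combination h2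
          rcases mul_eq_zero.mp h3 with h | h
          · exact absurd h (two_ne_zero_X n)
          · exact h
        rw [hrep, hw', aff_one]
      apply commute_of_components
      intro m
      rcases eq_or_ne m n with rfl | hmn
      · rw [hyn]; exact Commute.one_left _
      · rw [conj_component]
        have : (x : Amb) m = 1 := by rw [hx, Pi.mulSingle_eq_of_ne hmn]
        rw [this, mul_one, mul_inv_cancel]
        exact Commute.one_right _


open scoped Classical in
/-- slope of an affine permutation -/
def slope (n : ℕ) (e : Equiv.Perm (X n)) : (X n)ˣ :=
  if h : ∃ u v, e = aff n u v then h.choose else 1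

lemma slope_aff (n : ℕ) (u : (X n)ˣ) (v : X n) : slope n (aff n u v) = u := by
  have h : ∃ u' v', aff n u v = aff n u' v' := ⟨u, v, rfl⟩
  unfold slope
  rw [dif_pos h]
  obtain ⟨v', hv'⟩ := h.choose_spec
  exact (((aff_eq_iff n).mp hv').1).symm

/-- the slope character at position n -/
def kmap (S : Set ℕ) (n : ℕ) : ↥(GG S) →* (X n)ˣ where
  toFun g := slope n ((g : Amb) n)
  map_one' := by
    show slope n (((1 : ↥(GG S)) : Amb) n) = 1
    have h : (((1 : ↥(GG S)) : Amb) n) = aff n 1 0 := by rw [aff_one]; rfl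
    rw [h, slope_aff]
  map_mul' g g' := by
    obtain ⟨u, v, h⟩ := comp_mem g n
    obtain ⟨u', v', h'⟩ := comp_mem g' n
    have hmul : ((g * g' : ↥(GG S)) : Amb) n = (g : Amb) n * (g' : Amb) n := rfl
    simp only [hmul, h, h', aff_mul, slope_aff]

lemma kmap_apply {S : Set ℕ} (n : ℕ) (g : ↥(GG S)) {u : (X n)ˣ} {v : X n}
    (h : (g : Amb) n = aff n u v) : kmap S n g = u := by
  show slope n ((g : Amb) n) = u
  rw [h, slope_aff]

lemma conj_single_aff {S : Set ℕ} (g : ↥(GG S)) (n : ℕ) {v : X n} {x : ↥(GG S)}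
    (hx : (x : Amb) = Pi.mulSingle n (aff n 1 v)) :
    ((g * x * g⁻¹ : ↥(GG S)) : Amb)
      = Pi.mulSingle n (aff n 1 ((kmap S n g : X n) * v)) := by
  funext m
  rcases eq_or_ne m n with rfl | hmn
  · rw [conj_component, Pi.mulSingle_eq_same]
    obtain ⟨u, w, h⟩ := comp_mem g m
    have hk : kmap S m g = u := kmap_apply m g h
    rw [hx, Pi.mulSingle_eq_same, h, aff_inv, aff_mul, aff_mul, hk, aff_eq_iff]
    constructor
    · simp
    · simp only [Units.val_inv_eq_inv_val, Units.val_one, one_mul, Units.val_mul]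
      have hu0 : (u : X m) ≠ 0 := u.ne_zero
      field_simp
      ring
  · rw [conj_component, Pi.mulSingle_eq_of_ne hmn]
    have : (x : Amb) m = 1 := by rw [hx, Pi.mulSingle_eq_of_ne hmn]
    rw [this, mul_one, mul_inv_cancel]

lemma aff_one_one_ne (n : ℕ) : (1 : X n) ≠ 0 := one_ne_zero

/-- the canonical translation at position n -/
def tr (S : Set ℕ) (n : ℕ) : ↥(GG S) := sing S n (aff n 1 1) (aff_one_mem_W S n 1)

lemma tr_spec (S : Set ℕ) (n : ℕ) : Spec (P n) (tr S n) :=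
  (spec_iff n (tr S n)).mpr ⟨1, one_ne_zero, rfl⟩

lemma kmap_aut {S : Set ℕ} (φ : ↥(GG S) ≃* ↥(GG S)) (n : ℕ) (g : ↥(GG S)) :
    kmap S n (φ g) = kmap S n g := by
  -- the image of the canonical translation
  obtain ⟨w, hw, hφt⟩ := (spec_iff n (φ (tr S n))).mp ((tr_spec S n).map φ)
  set e : ℕ := ((kmap S n g : X n)).val with he
  have hecast : ((e : ℕ) : X n) = (kmap S n g : X n) := ZMod.natCast_zmod_val _
  -- conjugation of tr by g is tr ^ e
  have h1 : g * tr S n * g⁻¹ = (tr S n) ^ e := by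
    apply Subtype.ext
    have hc : ((tr S n : ↥(GG S)) : Amb) = Pi.mulSingle n (aff n 1 1) := rfl
    rw [conj_single_aff g n hc]
    have hp : (((tr S n) ^ e : ↥(GG S)) : Amb) = (Pi.mulSingle n (aff n 1 1) : Amb) ^ e := by
      norm_cast
    rw [hp, ← Pi.mulSingle_pow, aff_pow, hecast, mul_one]
  have h2 := congrArg φ h1
  rw [map_mul, map_mul, map_inv, map_pow] at h2
  have h3 := congrArg (fun q : ↥(GG S) => (q : Amb)) h2
  rw [conj_single_aff (φ g) n hφt] at h3
  have hp2 : ((φ (tr S n) ^ e : ↥(GG S)) : Amb) = (Pi.mulSingle n (aff n 1 w) : Amb) ^ e := by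
    rw [← hφt]; norm_cast
  rw [hp2, ← Pi.mulSingle_pow, aff_pow, hecast] at h3
  have h4 := congrFun h3 n
  rw [Pi.mulSingle_eq_same, Pi.mulSingle_eq_same] at h4
  have h5 := ((aff_eq_iff n).mp h4).2
  apply Units.ext
  exact mul_right_cancel₀ hw h5

lemma aff_mem_W_even (S : Set ℕ) (n : ℕ) (hn : n % 2 = 0) (u : (X n)ˣ) (v : X n) :
    aff n u v ∈ W S n := by
  rw [W_even S n hn]
  exact ⟨u, v, rfl⟩


lemma rinf (S : Set ℕ) : RInfinity ↥(GG S) := by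
  intro φ
  by_contra hinf
  rw [not_infinite_iff_finite] at hinf
  have hft : Fintype (Quot (TwistedConj φ)) := Fintype.ofFinite _
  set c := Fintype.card (Quot (TwistedConj φ)) with hc
  set n : ℕ := 2 * (c + 1) with hn
  have hne : n % 2 = 0 := by omega
  have hconst : ∀ a b : ↥(GG S), TwistedConj φ a b → kmap S n a = kmap S n b := by
    rintro a b ⟨x, rfl⟩
    rw [map_mul, map_mul, map_inv, kmap_aut φ n x]
    rw [mul_comm ((kmap S n x)⁻¹) (kmap S n a), mul_assoc, inv_mul_cancel, mul_one]
  let F : Quot (TwistedConj φ) → (X n)ˣ := Quot.lift (kmap S n) hconst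
  have hsurj : Function.Surjective F := by
    intro u
    refine ⟨Quot.mk _ (sing S n (aff n u 0) (aff_mem_W_even S n hne u 0)), ?_⟩
    show kmap S n _ = u
    apply kmap_apply
    rw [sing_coe, Pi.mulSingle_eq_same]
  have hcard := Fintype.card_le_of_surjective F hsurj
  rw [ZMod.card_units] at hcard
  have hge := P_ge n
  omega

lemma torsion (S : Set ℕ) : Monoid.IsTorsion ↥(GG S) := by
  intro g
  rw [isOfFinOrder_iff_pow_eq_one]
  have hfin : (supp (g : Amb)).Finite := (mem_GG.mp g.2).1
  refine ⟨∏ m ∈ hfin.toFinset, orderOf ((g : Amb) m), ?_, ?_⟩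
  · apply Finset.prod_pos
    intro m _
    exact orderOf_pos _
  · apply Subtype.ext
    funext m
    have hcoe : ((g ^ (∏ m ∈ hfin.toFinset, orderOf ((g : Amb) m)) : ↥(GG S)) : Amb) m
        = ((g : Amb) m) ^ (∏ m ∈ hfin.toFinset, orderOf ((g : Amb) m)) := rfl
    rw [hcoe]
    by_cases hm : m ∈ hfin.toFinset
    · have hdvd : orderOf ((g : Amb) m) ∣ ∏ m ∈ hfin.toFinset, orderOf ((g : Amb) m) :=
        Finset.dvd_prod_of_mem _ hm
      rw [orderOf_dvd_iff_pow_eq_one.mp hdvd]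
      rfl
    · have h1 : (g : Amb) m = 1 := by
        by_contra h
        exact hm (hfin.mem_toFinset.mpr h)
      rw [h1, one_pow]
      rfl

lemma countable_GG (S : Set ℕ) : Countable ↥(GG S) := by
  classical
  have henc : ∀ n : ℕ, ∃ f : Equiv.Perm (X n) → ℕ, Function.Injective f := fun n =>
    Countable.exists_injective_nat _
  choose enc henci using henc
  have hF : ∀ g : ↥(GG S),
      (Function.support fun n => if (g : Amb) n = 1 then 0
        else enc n ((g : Amb) n) + 1).Finite := by
    intro g
    refine Set.Finite.subset (mem_GG.mp g.2).1 ?_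
    intro m hm
    simp only [Function.mem_support, ne_eq, ite_eq_left_iff, not_forall] at hm
    exact hm.1
  set F : ↥(GG S) → (ℕ →₀ ℕ) := fun g => Finsupp.ofSupportFinite _ (hF g) with hFdef
  have hFinj : Function.Injective F := by
    intro a b hab
    apply Subtype.ext
    funext m
    have h := congrArg (fun f : ℕ →₀ ℕ => f m) hab
    simp only [hFdef, Finsupp.ofSupportFinite_coe] at h
    by_cases ha : (a : Amb) m = 1 <;> by_cases hb : (b : Amb) m = 1
    · rw [ha, hb]
    · rw [if_pos ha, if_neg hb] at h; omega
    · rw [if_neg ha, if_pos hb] at h; omega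
    · rw [if_neg ha, if_neg hb] at h
      exact henci m (by omega)
  exact hFinj.countable

lemma coprime_two (n : ℕ) : Nat.Coprime 2 (P n) :=
  (Nat.coprime_primes Nat.prime_two (P_prime n)).mpr (by have := P_ge5 n; omega)

lemma not_iso_aux {S T : Set ℕ} (θ : ↥(GG S) ≃* ↥(GG T)) (n : ℕ)
    (hS : W S n = Aff n) (hT : W T n = Dih n) : False := by
  set u2 : (X n)ˣ := ZMod.unitOfCoprime 2 (coprime_two n) with hu2
  have hu2c : (u2 : X n) = 2 := by
    rw [hu2, ZMod.coe_unitOfCoprime]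
    push_cast
    rfl
  have hgW : aff n u2 0 ∈ W S n := by
    rw [hS]
    exact ⟨u2, 0, rfl⟩
  set g : ↥(GG S) := sing S n (aff n u2 0) hgW with hg
  set x : ↥(GG S) := tr S n with hxdef
  -- conjugation inside GG S squares the translation
  have hx2 : g * x * g⁻¹ = x ^ 2 := by
    apply Subtype.ext
    have hxc : (x : Amb) = Pi.mulSingle n (aff n 1 1) := rfl
    rw [conj_single_aff g n hxc]
    have hk : kmap S n g = u2 := kmap_apply n g (by rw [hg, sing_coe, Pi.mulSingle_eq_same])
    have hx2c : ((x ^ 2 : ↥(GG S)) : Amb) = Pi.mulSingle n ((aff n 1 1) ^ 2) := by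
      rw [Pi.mulSingle_pow]
      rfl
    have h2 : (aff n 1 1) ^ 2 = aff n 1 ((2 : ℕ) * 1) := aff_pow n 1 2
    have harg : (u2 : X n) * 1 = ((2 : ℕ) : X n) * 1 := by
      rw [hu2c]; push_cast; ring
    rw [hx2c, hk, h2, harg]
  -- transfer to GG T
  obtain ⟨v, hv, hcv⟩ := (spec_iff n (θ x)).mp ((tr_spec S n).map θ)
  have hmem := comp_mem_W (θ g) n
  rw [hT] at hmem
  obtain ⟨ε, w, hε, hrep⟩ := hmem
  have hk2 : kmap T n (θ g) = ε := kmap_apply n (θ g) hrep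
  have h1 : θ (g * x * g⁻¹) = θ g * θ x * (θ g)⁻¹ := by
    rw [map_mul, map_mul, map_inv]
  have h2 : θ (g * x * g⁻¹) = (θ x) ^ 2 := by rw [hx2, map_pow]
  have h3 : ((θ g * θ x * (θ g)⁻¹ : ↥(GG T)) : Amb)
      = Pi.mulSingle n (aff n 1 ((ε : X n) * v)) := by
    rw [conj_single_aff (θ g) n hcv, hk2]
  have h4 : (((θ x) ^ 2 : ↥(GG T)) : Amb) = Pi.mulSingle n (aff n 1 ((2 : X n) * v)) := by
    have hpow : (((θ x) ^ 2 : ↥(GG T)) : Amb) = Pi.mulSingle n ((aff n 1 v) ^ 2) := by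
      rw [Pi.mulSingle_pow, ← hcv]
      rfl
    rw [hpow, aff_pow]
    norm_cast
  have h5 : Pi.mulSingle (M := fun m => Equiv.Perm (X m)) n (aff n 1 ((ε : X n) * v))
      = Pi.mulSingle n (aff n 1 ((2 : X n) * v)) := by
    rw [← h3, ← h4, ← h1, ← h2]
  have h6 := congrFun h5 n
  rw [Pi.mulSingle_eq_same, Pi.mulSingle_eq_same] at h6
  have h7 := ((aff_eq_iff n).mp h6).2
  rcases hε with rfl | rfl
  · apply hv
    rw [Units.val_one] at h7
    linear_combination -h7
  · apply hv
    rw [Units.val_neg, Units.val_one] at h7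
    have h8 : (3 : X n) * v = 0 := by linear_combination -h7
    rcases mul_eq_zero.mp h8 with h | h
    · exact absurd h (three_ne_zero_X n)
    · exact h

lemma subset_of_iso {S T : Set ℕ} (θ : ↥(GG S) ≃* ↥(GG T)) : S ⊆ T := by
  intro k hkS
  by_contra hkT
  exact not_iso_aux θ (2 * k + 1) (W_odd_mem S k hkS) (W_odd_not_mem T k hkT)

end R8
end

/-- There exist uncountably many pairwise non-isomorphic countable torsion groups with
the `R∞` property. -/
theorem exists_uncountably_many_torsion_rinfinity :
    ∃ (ι : Type) (_ : Uncountable ι) (G : ι → Type) (_ : ∀ i, Group (G i)),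
      (∀ i, Countable (G i)) ∧ (∀ i, Monoid.IsTorsion (G i)) ∧ (∀ i, RInfinity (G i)) ∧
      (∀ i j : ι, Nonempty (G i ≃* G j) → i = j) := by
  have hunc : Uncountable (Set ℕ) := by
    rw [← not_countable_iff]
    intro h
    obtain ⟨f, hf⟩ := exists_surjective_nat (Set ℕ)
    exact Function.cantor_surjective f hf
  refine ⟨Set ℕ, hunc, fun S => ↥(R8.GG S), fun S => inferInstance, fun S => R8.countable_GG S,
    fun S => R8.torsion S, fun S => R8.rinf S, ?_⟩
  rintro i j ⟨θ⟩
  exact Set.Subset.antisymm (R8.subset_of_iso θ) (R8.subset_of_iso θ.symm)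
end
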